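/- arXiv:1701.03478 — 11 statements merged into one kernel-verified Lean document; each statement's English description precedes it below -/
import Mathlib

section
/- Let K = (G, M, I) be a formal context with G and M finite, and let m ∈ M be an attribute that is not a full column, i.e. m' ≠ G. Then there exists an object g ∈ G \ m' (so (g,m) ∉ I) such that the context op^{g,m}(K) has at least as many concepts as K. -/
/-!
Let `F` be the family of extents of the context in which the column of `m` is made full, and
let `R = G \ m'`. An extent of `K` that is not in `F` lies inside `m'` and is the trace on `m'`
of its closure in the filled context; so `#Ext K = #F + #W`, where `W ⊆ F` is the family of
those closures. For `g ∈ R` the extents of `op^{g,m}(K)` are the sets `E` with `E ∈ F` or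
`E ∆ {g} ∈ F`, hence `#Ext op^{g,m}(K) = 2 #F - d g`, where `d g` counts the `C ∈ F` with
`C ∆ {g} ∈ F`. By averaging over `R` it suffices that `∑_{g ∈ R} d g + #R #W ≤ #R #F`, and
`∑_{g ∈ R} d g` counts the pairs `(C, g)` with `C, C ∆ {g} ∈ F`. A member of `W` cannot lose
an element of `R` inside `F`, so its pairs can be charged to the upper ends `C ∪ {g}`. A set
`C ∈ F` with `C \ {g₀} ∈ W` receives only that one charge, and `C \ {g₀}` contains some
`h ∈ R` (it is not inside `m'`) that `C` cannot lose inside `F`; so every `C ∈ F \ W` carries at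
most `#R` pairs and charges together.
-/

/-- Derivation of a set of objects: the attributes shared by all of them. -/
def intentOf {G M : Type*} (I : G → M → Prop) (S : Set G) : Set M :=
  {n | ∀ g ∈ S, I g n}

/-- Derivation of a set of attributes: the objects having all of them. -/
def extentOf {G M : Type*} (I : G → M → Prop) (B : Set M) : Set G :=
  {g | ∀ n ∈ B, I g n}

/-- Double derivation (closure) of a set of objects. -/
def cl {G M : Type*} (I : G → M → Prop) (S : Set G) : Set G :=
  extentOf I (intentOf I S)

/-- A set of objects is an extent if it is closed under double derivation. -/
def IsExtent {G M : Type*} (I : G → M → Prop) (S : Set G) : Prop :=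
  cl I S = S

/-- The number of concepts of the context equals its number of extents. -/
noncomputable def numConcepts {G M : Type*} (I : G → M → Prop) : ℕ :=
  {S : Set G | IsExtent I S}.ncard

/-- The context op^{g,m}(K): fill the row of `g` except at `m`,
and fill the column of `m` except at `g`. -/
def opRel {G M : Type*} (I : G → M → Prop) (g : G) (m : M) : G → M → Prop :=
  fun h n => I h n ∨ (h = g ∧ n ≠ m) ∨ (h ≠ g ∧ n = m)

/-- `S` is an `R`-mixed generator. -/
def MixGen {G M : Type*} (I : G → M → Prop) (R S : Set G) : Prop :=
  ∀ g : G, (g ∈ S ∩ R → cl I (S \ {g}) ≠ cl I S) ∧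
    (g ∉ S ∪ R → cl I (S ∪ {g}) ≠ cl I S)

/-- `S` strongly avoids `h` (with respect to the attribute `m`):
`S' ∩ (hᶜ \ {m}) ≠ ∅`. -/
def StronglyAvoids {G M : Type*} (I : G → M → Prop) (m : M) (S : Set G) (h : G) : Prop :=
  ∃ n, n ∈ intentOf I S ∧ ¬ I h n ∧ n ≠ m

/-- `χ(S)`: the set of objects of `R = G \ m'` strongly avoided by `S`. -/
def chi {G M : Type*} (I : G → M → Prop) (m : M) (S : Set G) : Set G :=
  {h | ¬ I h m ∧ StronglyAvoids I m S h}

open scoped symmDiff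

namespace Set

variable {α : Type*} {s : Set α} {a : α}

lemma symmDiff_singleton_of_mem (h : a ∈ s) : s ∆ {a} = s \ {a} := by
  ext x
  by_cases hx : x = a <;> simp [Set.mem_symmDiff, hx, h]

lemma symmDiff_singleton_of_notMem (h : a ∉ s) : s ∆ {a} = insert a s := by
  ext x
  by_cases hx : x = a <;> simp [Set.mem_symmDiff, hx, h]

end Set

namespace Finset

open scoped Classical

variable {α : Type*}

lemma sum_card_filter_swap {β : Type*} (s : Finset α) (t : Finset β) (r : α → β → Prop)
    [∀ a b, Decidable (r a b)] :
    ∑ b ∈ t, #{a ∈ s | r a b} = ∑ a ∈ s, #{b ∈ t | r a b} :=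
  (sum_card_bipartiteAbove_eq_sum_card_bipartiteBelow r).symm

lemma sum_card_filter_symmDiff_mem_comm (R : Finset α) (A B : Finset (Set α)) :
    ∑ C ∈ A, #{g ∈ R | C ∆ {g} ∈ B} = ∑ C ∈ B, #{g ∈ R | C ∆ {g} ∈ A} := by
  have toggle (g : α) : #{C ∈ A | C ∆ {g} ∈ B} = #{C ∈ B | C ∆ {g} ∈ A} := by
    refine card_nbij' (· ∆ {g}) (· ∆ {g}) ?_ ?_ (fun _ _ => symmDiff_symmDiff_cancel_right _ _)
      (fun _ _ => symmDiff_symmDiff_cancel_right _ _) <;>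
    · intro C hC
      simp only [coe_filter, Set.mem_ofPred_eq, symmDiff_symmDiff_cancel_right] at hC ⊢
      exact hC.symm
  rw [sum_card_filter_swap R A (fun g C => C ∆ {g} ∈ B),
    sum_card_filter_swap R B (fun g C => C ∆ {g} ∈ A)]
  exact sum_congr rfl fun g _ => toggle g

variable {R : Finset α} {F W : Finset (Set α)}

lemma mem_and_diff_mem_of_symmDiff_mem (hdown : ∀ B ∈ W, ∀ g ∈ R, g ∈ B → B \ {g} ∉ F)
    {C : Set α} (hC : C ∈ F) {g : α} (hg : g ∈ R) (hW : C ∆ {g} ∈ W) :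
    g ∈ C ∧ C \ {g} ∈ W := by
  by_cases hgC : g ∈ C
  · exact ⟨hgC, Set.symmDiff_singleton_of_mem hgC ▸ hW⟩
  · rw [Set.symmDiff_singleton_of_notMem hgC] at hW
    refine absurd ?_ (hdown _ hW g hg (Set.mem_insert g C))
    rwa [Set.insert_sdiff_self_of_notMem hgC]

lemma filter_symmDiff_mem_eq_empty (hWF : W ⊆ F)
    (hdown : ∀ B ∈ W, ∀ g ∈ R, g ∈ B → B \ {g} ∉ F) {C : Set α} (hC : C ∈ W) :
    {g ∈ R | C ∆ {g} ∈ W} = ∅ :=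
  filter_eq_empty_iff.mpr fun g hg hW =>
    have h := mem_and_diff_mem_of_symmDiff_mem hdown (hWF hC) hg hW
    hdown C hC g hg h.1 (hWF h.2)

lemma card_filter_symmDiff_mem_add_le (hWF : W ⊆ F)
    (hdown : ∀ B ∈ W, ∀ g ∈ R, g ∈ B → B \ {g} ∉ F) (hspan : ∀ B ∈ W, ∃ h ∈ R, h ∈ B)
    (hunique : ∀ C ∈ F, ∀ g ∈ R, g ∈ C → C \ {g} ∈ W →
      ∀ h ∈ R, h ∈ C → C \ {h} ∈ F → h = g)
    {C : Set α} (hC : C ∈ F) :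
    #{g ∈ R | C ∆ {g} ∈ F} + #{g ∈ R | C ∆ {g} ∈ W} ≤ #R := by
  by_cases hex : ∃ g ∈ R, C ∆ {g} ∈ W
  · obtain ⟨g₀, hg₀, hW⟩ := hex
    obtain ⟨hg₀C, hg₀W⟩ := mem_and_diff_mem_of_symmDiff_mem hdown hC hg₀ hW
    obtain ⟨h₀, hh₀, hh₀C⟩ := hspan _ hg₀W
    have hle_one : #{g ∈ R | C ∆ {g} ∈ W} ≤ 1 := by
      refine card_le_one.mpr fun a ha b hb => ?_
      rw [mem_filter] at ha hb
      have unique_of (x) (hx : x ∈ R) (hxW : C ∆ {x} ∈ W) : x = g₀ :=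
        have h := mem_and_diff_mem_of_symmDiff_mem hdown hC hx hxW
        hunique C hC g₀ hg₀ hg₀C hg₀W x hx h.1 (hWF h.2)
      rw [unique_of a ha.1 ha.2, unique_of b hb.1 hb.2]
    -- `h₀ ∈ C \ {g₀}` lies in `R`, so by `hunique` the set `C \ {h₀}` is not in `F`
    have hsub : {g ∈ R | C ∆ {g} ∈ F} ⊆ R.erase h₀ := by
      intro g hg
      rw [mem_filter] at hg
      refine mem_erase.mpr ⟨?_, hg.1⟩
      rintro rfl
      rw [Set.symmDiff_singleton_of_mem hh₀C.1] at hg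
      exact hh₀C.2 (hunique C hC g₀ hg₀ hg₀C hg₀W g hg.1 hh₀C.1 hg.2)
    have := card_le_card hsub
    rw [card_erase_of_mem hh₀] at this
    have : 0 < #R := card_pos.mpr ⟨h₀, hh₀⟩
    omega
  · push Not at hex
    rw [filter_false_of_mem hex, card_empty, add_zero]
    exact card_filter_le _ _

theorem exists_card_filter_symmDiff_mem_add_card_le (hR : R.Nonempty) (hWF : W ⊆ F)
    (hdown : ∀ B ∈ W, ∀ g ∈ R, g ∈ B → B \ {g} ∉ F) (hspan : ∀ B ∈ W, ∃ h ∈ R, h ∈ B)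
    (hunique : ∀ C ∈ F, ∀ g ∈ R, g ∈ C → C \ {g} ∈ W →
      ∀ h ∈ R, h ∈ C → C \ {h} ∈ F → h = g) :
    ∃ g ∈ R, #{C ∈ F | C ∆ {g} ∈ F} + #W ≤ #F := by
  refine exists_le_of_sum_le hR ?_
  have hW0 : ∑ C ∈ W, #{g ∈ R | C ∆ {g} ∈ W} = 0 :=
    sum_eq_zero fun C hC => by rw [filter_symmDiff_mem_eq_empty hWF hdown hC, card_empty]
  have hedges : ∑ g ∈ R, #{C ∈ F | C ∆ {g} ∈ F}
      = ∑ C ∈ F \ W, (#{g ∈ R | C ∆ {g} ∈ F} + #{g ∈ R | C ∆ {g} ∈ W}) := by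
    rw [← sum_card_filter_swap R F (fun g C => C ∆ {g} ∈ F), ← sum_sdiff hWF,
      sum_card_filter_symmDiff_mem_comm R W F, ← sum_sdiff hWF, hW0, add_zero, sum_add_distrib]
  calc ∑ g ∈ R, (#{C ∈ F | C ∆ {g} ∈ F} + #W)
      = ∑ C ∈ F \ W, (#{g ∈ R | C ∆ {g} ∈ F} + #{g ∈ R | C ∆ {g} ∈ W}) + #R * #W := by
        rw [sum_add_distrib, hedges, sum_const, smul_eq_mul]
    _ ≤ #(F \ W) * #R + #R * #W := by
        gcongr
        exact sum_le_card_nsmul _ _ _ fun C hC =>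
          card_filter_symmDiff_mem_add_le hWF hdown hspan hunique (sdiff_subset hC)
    _ = ∑ g ∈ R, #F := by
        rw [sum_const, smul_eq_mul, ← card_sdiff_add_card_eq_card hWF]
        ring

end Finset

section Closure

variable {G M : Type*} {I : G → M → Prop} {S T : Set G}

lemma subset_cl (S : Set G) : S ⊆ cl I S := fun _ hx _ hn => hn _ hx

lemma cl_mono (h : S ⊆ T) : cl I S ⊆ cl I T := fun _ hx n hn => hx n fun y hy => hn y (h hy)

lemma cl_subset_of_isExtent (hT : IsExtent I T) (h : S ⊆ T) : cl I S ⊆ T :=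
  hT ▸ cl_mono h

lemma isExtent_cl (S : Set G) : IsExtent I (cl I S) :=
  Set.Subset.antisymm (fun _ hx n hn => hx n fun _ hy => hy n hn) (subset_cl _)

lemma isExtent_iff_cl_subset : IsExtent I S ↔ cl I S ⊆ S :=
  ⟨fun h => h.subset, fun h => h.antisymm (subset_cl S)⟩

lemma cl_subset_insert_iff {g : G} :
    cl I S ⊆ insert g S ↔ IsExtent I S ∨ IsExtent I (insert g S) := by
  refine ⟨fun h => ?_, ?_⟩
  · by_cases hg : g ∈ cl I S
    · have : cl I S = insert g S := h.antisymm (Set.insert_subset hg (subset_cl S))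
      exact Or.inr (this ▸ isExtent_cl S)
    · exact Or.inl (isExtent_iff_cl_subset.mpr fun x hx =>
        (h hx).resolve_left fun hxg => hg (hxg ▸ hx))
  · rintro (h | h)
    · exact h.subset.trans (Set.subset_insert g S)
    · exact (cl_mono (Set.subset_insert g S)).trans h.subset

end Closure

section FilledColumn

variable {G M : Type*} (I : G → M → Prop) (m : M)

def fillColumn : G → M → Prop := fun h n => I h n ∨ n = m

def extents : Set (Set G) := {S | IsExtent I S}

def lostExtents : Set (Set G) := extents I \ extents (fillColumn I m)

def lostHulls : Set (Set G) := cl (fillColumn I m) '' lostExtents I m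

variable {I m} {S E : Set G}

lemma cl_subset_cl_fillColumn : cl I S ⊆ cl (fillColumn I m) S :=
  fun _ hx n hn => (em (n = m)).elim Or.inr fun h =>
    Or.inl (hx n fun y hy => (hn y hy).resolve_right h)

lemma cl_fillColumn_inter_subset : cl (fillColumn I m) S ∩ {g | I g m} ⊆ cl I S :=
  fun _ ⟨hx, hxm⟩ n hn => (hx n fun y hy => Or.inl (hn y hy)).elim id fun h => h ▸ hxm

lemma IsExtent.of_fillColumn (hS : IsExtent (fillColumn I m) S) : IsExtent I S :=
  Set.Subset.antisymm (cl_subset_cl_fillColumn.trans hS.subset) (subset_cl S)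

lemma subset_of_mem_lostExtents (hE : E ∈ lostExtents I m) : E ⊆ {g | I g m} := by
  by_contra hsub
  refine hE.2 (Set.Subset.antisymm (fun x hx => hE.1.subset fun n hn => ?_) (subset_cl E))
  refine (hx n fun y hy => Or.inl (hn y hy)).resolve_right ?_
  rintro rfl
  exact hsub hn

lemma cl_fillColumn_inter_eq (hE : E ∈ lostExtents I m) :
    cl (fillColumn I m) E ∩ {g | I g m} = E :=
  Set.Subset.antisymm (cl_fillColumn_inter_subset.trans hE.1.subset)
    (Set.subset_inter (subset_cl E) (subset_of_mem_lostExtents hE))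

lemma numConcepts_eq_ncard_add_ncard [Finite G] :
    numConcepts I = (extents (fillColumn I m)).ncard + (lostHulls I m).ncard := by
  have hunion : extents I = extents (fillColumn I m) ∪ lostExtents I m :=
    (Set.union_sdiff_cancel fun _ => IsExtent.of_fillColumn).symm
  have hdisj : Disjoint (extents (fillColumn I m)) (lostExtents I m) := Set.disjoint_sdiff_right
  have hinj : Set.InjOn (cl (fillColumn I m)) (lostExtents I m) := fun E₁ h₁ E₂ h₂ h => by
    rw [← cl_fillColumn_inter_eq h₁, ← cl_fillColumn_inter_eq h₂, h]
  rw [numConcepts, ← extents, hunion, Set.ncard_union_eq hdisj, lostHulls, hinj.ncard_image]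

lemma lostHulls_subset_extents : lostHulls I m ⊆ extents (fillColumn I m) := by
  rintro _ ⟨E, -, rfl⟩
  exact isExtent_cl E

lemma diff_notMem_extents_of_mem_lostHulls {B : Set G} (hB : B ∈ lostHulls I m) {h : G}
    (hh : ¬ I h m) (hhB : h ∈ B) : B \ {h} ∉ extents (fillColumn I m) := by
  obtain ⟨E, hE, rfl⟩ := hB
  have hEm := subset_of_mem_lostExtents hE
  intro hext
  have hsub : E ⊆ cl (fillColumn I m) E \ {h} := fun _ hx =>
    ⟨subset_cl E hx, fun hxh => hh (hxh ▸ hEm hx)⟩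
  exact (cl_subset_of_isExtent hext hsub hhB).2 rfl

lemma exists_notMem_of_mem_lostHulls {B : Set G} (hB : B ∈ lostHulls I m) :
    ∃ h, ¬ I h m ∧ h ∈ B := by
  obtain ⟨E, hE, rfl⟩ := hB
  by_contra! hall
  apply hE.2
  have : cl (fillColumn I m) E = E := by
    nth_rewrite 2 [← cl_fillColumn_inter_eq hE]
    exact (Set.inter_eq_left.mpr fun x hx => not_not.mp fun hxm => hall x hxm hx).symm
  exact this ▸ isExtent_cl E

lemma eq_of_diff_mem_lostHulls {C : Set G} {g₀ h : G} (hg₀ : g₀ ∈ C)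
    (hC : C \ {g₀} ∈ lostHulls I m) (hh : ¬ I h m) (hhC : h ∈ C)
    (hCh : C \ {h} ∈ extents (fillColumn I m)) : h = g₀ := by
  obtain ⟨E, hE, hEC⟩ := hC
  have hEm := subset_of_mem_lostExtents hE
  by_contra hne
  have hsub : insert g₀ E ⊆ C \ {h} :=
    Set.insert_subset ⟨hg₀, Ne.symm hne⟩ fun x hx =>
      ⟨(hEC ▸ subset_cl E hx : x ∈ C \ {g₀}).1, fun hxh => hh (hxh ▸ hEm hx)⟩
  have hC_sub : C ⊆ cl (fillColumn I m) (insert g₀ E) := fun x hx =>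
    (em (x = g₀)).elim (fun hx₀ => subset_cl _ (hx₀ ▸ Set.mem_insert g₀ E))
      fun hx₀ => cl_mono (Set.subset_insert g₀ E) (hEC ▸ ⟨hx, hx₀⟩)
  exact (cl_subset_of_isExtent hCh hsub (hC_sub hhC)).2 rfl

-- Row `g` of `opRel I g m` is `M \ {m}`; every other row is that of `fillColumn I m`.
lemma cl_opRel_of_mem {g : G} (hgm : ¬ I g m) (hg : g ∈ S) :
    cl (opRel I g m) S = insert g (cl (fillColumn I m) (S \ {g})) := by
  ext x
  simp only [cl, extentOf, intentOf, opRel, fillColumn, Set.mem_ofPred_eq, Set.mem_insert_iff,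
    Set.mem_sdiff, Set.mem_singleton_iff]
  grind

lemma cl_opRel_of_notMem {g : G} (hgm : ¬ I g m) (hg : g ∉ S) :
    cl (opRel I g m) S = cl (fillColumn I m) S \ {g} := by
  ext x
  simp only [cl, extentOf, intentOf, opRel, fillColumn, Set.mem_ofPred_eq, Set.mem_sdiff,
    Set.mem_singleton_iff]
  grind

lemma isExtent_opRel_iff {g : G} (hgm : ¬ I g m) {E : Set G} :
    IsExtent (opRel I g m) E ↔
      E ∈ extents (fillColumn I m) ∨ E ∆ {g} ∈ extents (fillColumn I m) := by
  rw [isExtent_iff_cl_subset]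
  by_cases hg : g ∈ E
  · rw [cl_opRel_of_mem hgm hg, Set.insert_subset_iff, and_iff_right hg,
      Set.symmDiff_singleton_of_mem hg, or_comm]
    have := cl_subset_insert_iff (I := fillColumn I m) (S := E \ {g}) (g := g)
    rwa [Set.insert_sdiff_singleton, Set.insert_eq_of_mem hg] at this
  · rw [cl_opRel_of_notMem hgm hg, Set.sdiff_subset_iff, Set.singleton_union,
      Set.symmDiff_singleton_of_notMem hg]
    exact cl_subset_insert_iff

lemma numConcepts_opRel_add [Finite G] {g : G} (hgm : ¬ I g m) :
    numConcepts (opRel I g m) +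
        (extents (fillColumn I m) ∩ (· ∆ {g}) ⁻¹' extents (fillColumn I m)).ncard =
      2 * (extents (fillColumn I m)).ncard := by
  have htoggle : Function.Involutive (· ∆ ({g} : Set G)) := fun _ =>
    symmDiff_symmDiff_cancel_right _ _
  have hext : {S | IsExtent (opRel I g m) S} =
      extents (fillColumn I m) ∪ (· ∆ {g}) ⁻¹' extents (fillColumn I m) :=
    Set.ext fun _ => isExtent_opRel_iff hgm
  rw [numConcepts, hext, Set.ncard_union_add_ncard_inter,
    Set.ncard_preimage_of_injective_subset_range htoggle.injective
      (htoggle.surjective.range_eq ▸ Set.subset_univ _), two_mul]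

end FilledColumn

theorem statement0_general {G M : Type*} [Fintype G] (I : G → M → Prop)
    (m : M) (hm : {g : G | I g m} ≠ Set.univ) :
    ∃ g : G, ¬ I g m ∧ numConcepts I ≤ numConcepts (opRel I g m) := by
  classical
  set F := extents (fillColumn I m)
  have hR : (Finset.univ.filter fun g => ¬ I g m).Nonempty := by
    obtain ⟨g, hg⟩ := (Set.ne_univ_iff_exists_notMem _).mp hm
    exact ⟨g, by simpa using hg⟩
  obtain ⟨g, hgR, hg⟩ := Finset.exists_card_filter_symmDiff_mem_add_card_le hR
    (F := F.toFinset) (W := (lostHulls I m).toFinset)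
    (Set.toFinset_subset_toFinset.mpr lostHulls_subset_extents)
    (by simpa using fun B hB g hg => diff_notMem_extents_of_mem_lostHulls hB hg)
    (by simpa using fun B hB => exists_notMem_of_mem_lostHulls hB)
    (by simpa using fun C _ g hg hgC hC h hh hhC => eq_of_diff_mem_lostHulls hgC hC hh hhC)
  have hgm : ¬ I g m := by simpa using hgR
  refine ⟨g, hgm, ?_⟩
  have hd : ({C ∈ F.toFinset | C ∆ {g} ∈ F.toFinset} : Finset _).card =
      (F ∩ (· ∆ {g}) ⁻¹' F).ncard := by
    rw [Set.ncard_eq_toFinset_card']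
    congr 1
    ext C
    simp
  have hK : numConcepts I = F.ncard + (lostHulls I m).ncard := numConcepts_eq_ncard_add_ncard
  have hop : numConcepts (opRel I g m) + (F ∩ (· ∆ {g}) ⁻¹' F).ncard = 2 * F.ncard :=
    numConcepts_opRel_add hgm
  rw [hd, ← Set.ncard_eq_toFinset_card', ← Set.ncard_eq_toFinset_card'] at hg
  omega

theorem statement0 {G M : Type*} [Fintype G] [Fintype M] (I : G → M → Prop)
    (m : M) (hm : {g : G | I g m} ≠ Set.univ) :
    ∃ g : G, ¬ I g m ∧ numConcepts I ≤ numConcepts (opRel I g m) :=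
  statement0_general I m hm
end

section
/- Let K = (G, M, I) be a formal context with G and M finite and let (g,m) be a non-incident pair, i.e. (g,m) ∉ I. Then the number of concepts of op^{g,m}(K) equals 2 · (number of concepts of K_{-g-m}). In particular, 2 · (number of concepts of K_{-g-m}) ≥ (number of concepts of K) if and only if op^{g,m}(K) has at least as many concepts as K. -/
lemma mem_clJ {G M : Type*} (I : G → M → Prop) (g : G) (m : M) (hgm : ¬ I g m)
    (S : Set G) (h : G) :
    h ∈ cl (opRel I g m) S ↔
      (h = g ∧ g ∈ S) ∨
      (h ≠ g ∧ ∀ n : M, n ≠ m → (∀ h' ∈ S, h' ≠ g → I h' n) → I h n) := by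
  simp only [cl, extentOf, intentOf, opRel, Set.mem_setOf_eq]
  by_cases hg : h = g
  · subst hg
    constructor
    · intro H
      refine Or.inl ⟨rfl, ?_⟩
      by_contra hgS
      have hm : ∀ h' ∈ S, I h' m ∨ (h' = h ∧ m ≠ m) ∨ (h' ≠ h ∧ m = m) := by
        intro h' hS
        exact Or.inr (Or.inr ⟨fun e => hgS (e ▸ hS), rfl⟩)
      rcases H m hm with h1 | ⟨_, h2⟩ | ⟨h3, _⟩
      · exact hgm h1
      · exact h2 rfl
      · exact h3 rfl
    · rintro (⟨_, hgS⟩ | ⟨hne, _⟩)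
      · intro n hn
        by_cases hnm : n = m
        · subst hnm
          rcases hn h hgS with h1 | ⟨_, h2⟩ | ⟨h3, _⟩
          · exact Or.inl h1
          · exact absurd rfl h2
          · exact absurd rfl h3
        · exact Or.inr (Or.inl ⟨rfl, hnm⟩)
      · exact absurd rfl hne
  · constructor
    · intro H
      refine Or.inr ⟨hg, fun n hnm hall => ?_⟩
      have hn : ∀ h' ∈ S, I h' n ∨ (h' = g ∧ n ≠ m) ∨ (h' ≠ g ∧ n = m) := by
        intro h' hS
        by_cases h'g : h' = g
        · exact Or.inr (Or.inl ⟨h'g, hnm⟩)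
        · exact Or.inl (hall h' hS h'g)
      rcases H n hn with h1 | ⟨h2, _⟩ | ⟨_, h3⟩
      · exact h1
      · exact absurd h2 hg
      · exact absurd h3 hnm
    · rintro (⟨he, _⟩ | ⟨_, hcl⟩)
      · exact absurd he hg
      · intro n hn
        by_cases hnm : n = m
        · exact Or.inr (Or.inr ⟨hg, hnm⟩)
        · refine Or.inl (hcl n hnm fun h' hS h'g => ?_)
          rcases hn h' hS with h1 | ⟨h2, _⟩ | ⟨_, h3⟩
          · exact h1
          · exact absurd h2 h'g
          · exact absurd h3 hnm

lemma mem_cl_sub {G M : Type*} (I : G → M → Prop) (g : G) (m : M)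
    (S : Set G) (x : {h : G // h ≠ g}) :
    x ∈ cl (fun (h : {h : G // h ≠ g}) (n : {n : M // n ≠ m}) => I h.1 n.1)
        {y : {h : G // h ≠ g} | y.1 ∈ S} ↔
      ∀ n : M, n ≠ m → (∀ h' ∈ S, h' ≠ g → I h' n) → I x.1 n := by
  simp only [cl, extentOf, intentOf, Set.mem_setOf_eq]
  constructor
  · intro H n hnm hall
    exact H ⟨n, hnm⟩ (fun y hy => hall y.1 hy y.2)
  · intro H n hn
    exact H n.1 n.2 (fun h' hS h'g => hn ⟨h', h'g⟩ hS)

lemma extent_iff {G M : Type*} (I : G → M → Prop) (g : G) (m : M) (hgm : ¬ I g m)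
    (S : Set G) :
    IsExtent (opRel I g m) S ↔
      IsExtent (fun (h : {h : G // h ≠ g}) (n : {n : M // n ≠ m}) => I h.1 n.1)
        {y : {h : G // h ≠ g} | y.1 ∈ S} := by
  constructor
  · intro H
    unfold IsExtent at *
    ext x
    rw [mem_cl_sub]
    have := (mem_clJ I g m hgm S x.1)
    rw [H] at this
    constructor
    · intro hc
      have : x.1 ∈ S := this.mpr (Or.inr ⟨x.2, hc⟩)
      exact this
    · intro hx
      rcases this.mp hx with ⟨he, _⟩ | ⟨_, hc⟩
      · exact absurd he x.2
      · exact hc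
  · intro H
    unfold IsExtent at *
    ext h
    rw [mem_clJ I g m hgm]
    by_cases hg : h = g
    · subst hg
      constructor
      · rintro (⟨_, hS⟩ | ⟨hne, _⟩)
        · exact hS
        · exact absurd rfl hne
      · exact fun hS => Or.inl ⟨rfl, hS⟩
    · constructor
      · rintro (⟨he, _⟩ | ⟨_, hc⟩)
        · exact absurd he hg
        · have : (⟨h, hg⟩ : {h : G // h ≠ g}) ∈
              cl (fun (h : {h : G // h ≠ g}) (n : {n : M // n ≠ m}) => I h.1 n.1)
                {y : {h : G // h ≠ g} | y.1 ∈ S} := (mem_cl_sub I g m S ⟨h, hg⟩).mpr hc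
          rw [H] at this
          exact this
      · intro hS
        refine Or.inr ⟨hg, ?_⟩
        rw [← mem_cl_sub I g m S ⟨h, hg⟩, H]
        exact hS

theorem statement2 {G M : Type*} [Fintype G] [Fintype M] (I : G → M → Prop)
    (g : G) (m : M) (hgm : ¬ I g m) :
    numConcepts (opRel I g m) =
      2 * numConcepts (fun (h : {h : G // h ≠ g}) (n : {n : M // n ≠ m}) => I h.1 n.1) ∧
    (numConcepts I ≤
        2 * numConcepts (fun (h : {h : G // h ≠ g}) (n : {n : M // n ≠ m}) => I h.1 n.1) ↔
      numConcepts I ≤ numConcepts (opRel I g m)) := by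
  classical
  set I₀ : {h : G // h ≠ g} → {n : M // n ≠ m} → Prop := fun h n => I h.1 n.1 with hI₀
  have e : {S : Set G // IsExtent (opRel I g m) S} ≃
      {T : Set {h : G // h ≠ g} // IsExtent I₀ T} × Bool :=
    { toFun := fun S => (⟨{y | y.1 ∈ S.1}, (extent_iff I g m hgm S.1).mp S.2⟩,
        if g ∈ S.1 then true else false)
      invFun := fun P => ⟨{h | (h = g ∧ P.2 = true) ∨ ∃ hh : h ≠ g, (⟨h, hh⟩ : {h : G // h ≠ g}) ∈ P.1.1}, by
        rw [extent_iff I g m hgm]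
        have : {y : {h : G // h ≠ g} | y.1 ∈ {h | (h = g ∧ P.2 = true) ∨
            ∃ hh : h ≠ g, (⟨h, hh⟩ : {h : G // h ≠ g}) ∈ P.1.1}} = P.1.1 := by
          ext y
          simp only [Set.mem_setOf_eq]
          constructor
          · rintro (⟨he, _⟩ | ⟨hh, hy⟩)
            · exact absurd he y.2
            · simpa using hy
          · intro hy
            exact Or.inr ⟨y.2, by simpa using hy⟩
        rw [this]
        exact P.1.2⟩
      left_inv := by
        rintro ⟨S, hS⟩
        ext h
        simp only [Set.mem_setOf_eq]
        by_cases hg : h = g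
        · by_cases hgS : g ∈ S <;> simp [hg, hgS]
        · simp only [hg, false_and, false_or]
          constructor
          · rintro ⟨_, hy⟩; exact hy
          · exact fun hy => ⟨hg, hy⟩
      right_inv := by
        rintro ⟨⟨T, hT⟩, b⟩
        refine Prod.ext ?_ ?_
        · apply Subtype.ext
          ext y
          simp only [Set.mem_setOf_eq]
          constructor
          · rintro (⟨he, _⟩ | ⟨hh, hy⟩)
            · exact absurd he y.2
            · simpa using hy
          · intro hy
            exact Or.inr ⟨y.2, by simpa using hy⟩
        · cases b <;> simp }
  have h1 : numConcepts (opRel I g m) = 2 * numConcepts I₀ := by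
    have c1 : numConcepts (opRel I g m) = Nat.card {S : Set G // IsExtent (opRel I g m) S} :=
      (Nat.card_coe_set_eq _).symm
    have c2 : numConcepts I₀ = Nat.card {T : Set {h : G // h ≠ g} // IsExtent I₀ T} :=
      (Nat.card_coe_set_eq _).symm
    rw [c1, c2, Nat.card_congr e, Nat.card_prod]
    simp [mul_comm]
  exact ⟨h1, by rw [h1]⟩
end

section
/- Let K = (G, M, I) be a formal context, R ⊆ G, and let S ⊆ G be an R-mixed generator. Then S is an extent of K if and only if (S'' \ S) ∩ R = ∅. -/
theorem statement3 {G M : Type*} (I : G → M → Prop) (R : Set G) (S : Set G)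
    (hS : MixGen I R S) :
    IsExtent I S ↔ (cl I S \ S) ∩ R = ∅ := by
  have hsub : S ⊆ cl I S := fun g hg n hn => hn g hg
  constructor
  · intro h
    rw [h]
    simp
  · intro h
    apply Set.Subset.antisymm _ hsub
    intro g hg
    by_contra hgS
    have hgR : g ∉ R := by
      intro hr
      have : g ∈ (cl I S \ S) ∩ R := ⟨⟨hg, hgS⟩, hr⟩
      rw [h] at this; exact this
    have hne := (hS g).2 (fun hmem => hmem.elim hgS hgR)
    apply hne
    have hint : intentOf I (S ∪ {g}) = intentOf I S := by
      ext n
      constructor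
      · intro hn x hx; exact hn x (Or.inl hx)
      · intro hn x hx
        rcases hx with hx | hx
        · exact hn x hx
        · rw [Set.mem_singleton_iff] at hx; subst hx; exact hg n hn
    unfold cl
    rw [hint]
end

section
/- Let K = (G, M, I) be a formal context, m ∈ M, R = G \ m', and let S ⊆ G satisfy S ∩ R = ∅. Then S is an R-mixed generator if and only if S is an extent of K. -/
theorem statement4 {G M : Type*} (I : G → M → Prop) (m : M) (S : Set G)
    (hS : S ∩ {h : G | ¬ I h m} = ∅) :
    MixGen I {h : G | ¬ I h m} S ↔ IsExtent I S := by
  have hSm : ∀ h ∈ S, I h m := by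
    intro h hh
    by_contra hc
    exact absurd (Set.mem_inter hh hc) (by rw [hS]; exact id)
  have subcl : S ⊆ cl I S := fun g hg n hn => hn g hg
  constructor
  · intro hmg
    apply Set.Subset.antisymm _ subcl
    intro g hg
    by_contra hgS
    have hgR : I g m := hg m (fun h hh => hSm h hh)
    have hnot : g ∉ S ∪ {h : G | ¬ I h m} := by
      rintro (h1 | h2)
      · exact hgS h1
      · exact h2 hgR
    apply (hmg g).2 hnot
    have hint : intentOf I (S ∪ {g}) = intentOf I S := by
      apply Set.Subset.antisymm
      · intro n hn h hh; exact hn h (Or.inl hh)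
      · intro n hn h hh
        rcases hh with hh | hh
        · exact hn h hh
        · rw [Set.mem_singleton_iff] at hh; subst hh; exact hg n hn
    unfold cl; rw [hint]
  · intro hext g
    refine ⟨fun hg => absurd (hS ▸ hg : g ∈ (∅ : Set G)) (Set.notMem_empty g), ?_⟩
    intro hg hcl
    apply hg
    left
    have : g ∈ cl I (S ∪ {g}) := fun n hn => hn g (Or.inr rfl)
    rw [hcl, hext] at this
    exact this
end

section
/- Let K = (G, M, I) be a formal context and R ⊆ G. If S ⊆ G is both an R-mixed generator and an extent of K, then S is the unique R-mixed generator of itself: every R-mixed generator T with T'' = S satisfies T = S. -/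
theorem statement5 {G M : Type*} (I : G → M → Prop) (R : Set G) (S : Set G)
    (hS : MixGen I R S) (hext : IsExtent I S) :
    ∀ T : Set G, MixGen I R T → cl I T = S → T = S := by
  intro T hT hclT
  have hmono : ∀ A B : Set G, A ⊆ B → cl I A ⊆ cl I B := fun A B hAB g hg n hn =>
    hg n (fun x hx => hn x (hAB hx))
  have hext' : ∀ A : Set G, A ⊆ cl I A := fun A g hg n hn => hn g hg
  have hTS : T ⊆ S := hclT ▸ hext' T
  apply Set.Subset.antisymm hTS
  intro g hgS
  by_contra hgT
  by_cases hgR : g ∈ R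
  · -- use S mixgen: cl (S \ {g}) ≠ cl S, but T ⊆ S \ {g}
    apply (hS g).1 ⟨hgS, hgR⟩
    apply Set.Subset.antisymm (hmono _ _ (Set.diff_subset))
    calc cl I S = S := hext
      _ = cl I T := hclT.symm
      _ ⊆ cl I (S \ {g}) := hmono _ _ (fun x hx => ⟨hTS hx, fun h => hgT (h ▸ hx)⟩)
  · apply (hT g).2 (fun h => h.elim hgT hgR)
    apply Set.Subset.antisymm
    · calc cl I (T ∪ {g}) ⊆ cl I S := hmono _ _ (Set.union_subset hTS (by simpa using hgS))
        _ = S := hext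
        _ = cl I T := hclT.symm
    · exact hmono _ _ Set.subset_union_left
end

section
/- Let K = (G, M, I) be a formal context, m ∈ M, R = G \ m', g ∈ R, and let L = op^{g,m}(K) with derivation (·)^J. If S is an R-mixed generator of K, then for every h ∈ G with h ∉ S ∪ R it holds that (S ∪ {h})^{JJ} ≠ S^{JJ}. In particular, if S ∩ R = ∅, then S is an R-mixed generator of L. -/
lemma cl_union_eq_of_mem {G M : Type*} (I : G → M → Prop) (S : Set G) (h : G)
    (hh : h ∈ cl I S) : cl I (S ∪ {h}) = cl I S := by
  have hint : intentOf I (S ∪ {h}) = intentOf I S := by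
    ext n
    constructor
    · intro hn x hx; exact hn x (Or.inl hx)
    · intro hn x hx
      rcases hx with hx | hx
      · exact hn x hx
      · rcases hx with rfl; exact hh n hn

  unfold cl; rw [hint]

theorem statement7 {G M : Type*} (I : G → M → Prop) (m : M) (g : G)
    (hg : ¬ I g m) (S : Set G) (hS : MixGen I {h : G | ¬ I h m} S) :
    (∀ h : G, h ∉ S ∪ {h : G | ¬ I h m} →
      cl (opRel I g m) (S ∪ {h}) ≠ cl (opRel I g m) S) ∧
    (S ∩ {h : G | ¬ I h m} = ∅ → MixGen (opRel I g m) {h : G | ¬ I h m} S) := by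
  have part1 : ∀ h : G, h ∉ S ∪ {h : G | ¬ I h m} →
      cl (opRel I g m) (S ∪ {h}) ≠ cl (opRel I g m) S := by
    intro h hh heq
    have hhm : I h m := by
      by_contra hm; exact hh (Or.inr hm)
    have hhg : h ≠ g := by rintro rfl; exact hg hhm
    have h1 := (hS h).2 hh
    have hnotcl : h ∉ cl I S := fun hc => h1 (cl_union_eq_of_mem I S h hc)
    simp only [cl, extentOf, intentOf, Set.mem_setOf_eq] at hnotcl
    push_neg at hnotcl
    obtain ⟨n, hn, hIn⟩ := hnotcl
    have hnm : n ≠ m := by rintro rfl; exact hIn hhm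
    have hnJ : n ∈ intentOf (opRel I g m) S := fun x hx => Or.inl (hn x hx)
    have hnotJ : ¬ opRel I g m h n := by
      rintro (h' | ⟨rfl, _⟩ | ⟨_, rfl⟩)
      · exact hIn h'
      · exact hhg rfl
      · exact hnm rfl
    have hmem : h ∈ cl (opRel I g m) (S ∪ {h}) := by
      intro n' hn'
      exact hn' h (Or.inr rfl)
    rw [heq] at hmem
    exact hnotJ (hmem n hnJ)
  refine ⟨part1, fun hdisj g0 => ⟨fun hg0 => ?_, part1 g0⟩⟩
  rw [hdisj] at hg0
  exact absurd hg0 (Set.notMem_empty g0)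
end

section
/- Let K = (G, M, I) be a formal context, m ∈ M, R = G \ m', g ∈ R, L = op^{g,m}(K) with derivation (·)^J, and let S be an R-mixed generator of K. Then S is not an R-mixed generator of L if and only if there is exactly one element h ∈ R \ {g} such that S ∩ R = {h} and (S \ {h})^J = S' ∪ {m}. -/
lemma mem_intent {G M : Type*} {I : G → M → Prop} {S : Set G} {n : M} :
    n ∈ intentOf I S ↔ ∀ g ∈ S, I g n := Iff.rfl

lemma intent_mono {G M : Type*} (I : G → M → Prop) {T1 T2 : Set G} (h : T1 ⊆ T2) :
    intentOf I T2 ⊆ intentOf I T1 := fun _ hn k hk => hn k (h hk)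

lemma intent_cl {G M : Type*} (I : G → M → Prop) (T : Set G) :
    intentOf I (cl I T) = intentOf I T := by
  ext n
  constructor
  · intro hn k hk
    exact hn k (fun n' hn' => hn' k hk)
  · intro hn k hk
    exact hk n hn

lemma cl_eq_iff {G M : Type*} (I : G → M → Prop) {T1 T2 : Set G} :
    cl I T1 = cl I T2 ↔ intentOf I T1 = intentOf I T2 := by
  constructor
  · intro h
    rw [← intent_cl I T1, ← intent_cl I T2, h]
  · intro h
    unfold cl
    rw [h]

lemma intentJ_of_not_mem {G M : Type*} (I : G → M → Prop) (g : G) (m : M) {T : Set G}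
    (hgT : g ∉ T) : intentOf (opRel I g m) T = intentOf I T ∪ {m} := by
  ext n
  constructor
  · intro hn
    by_cases hnm : n = m
    · exact Or.inr hnm
    · refine Or.inl ?_
      intro k hk
      rcases hn k hk with h | ⟨rfl, _⟩ | ⟨_, rfl⟩
      · exact h
      · exact absurd hk hgT
      · exact absurd rfl hnm
  · rintro (hn | hn) k hk
    · exact Or.inl (hn k hk)
    · exact Or.inr (Or.inr ⟨fun e => hgT (e ▸ hk), hn⟩)

lemma intentJ_of_mem {G M : Type*} (I : G → M → Prop) {g : G} {m : M} {T : Set G}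
    (hg : ¬ I g m) (hgT : g ∈ T) :
    intentOf (opRel I g m) T = intentOf I (T \ {g}) \ {m} := by
  ext n
  constructor
  · intro hn
    have hnm : n ≠ m := by
      rintro rfl
      rcases hn g hgT with h | ⟨_, h⟩ | ⟨h, _⟩
      · exact hg h
      · exact h rfl
      · exact h rfl
    refine ⟨fun k hk => ?_, hnm⟩
    rcases hn k hk.1 with h | ⟨rfl, _⟩ | ⟨_, rfl⟩
    · exact h
    · exact absurd rfl hk.2
    · exact absurd rfl hnm
  · rintro ⟨hn, hnm⟩ k hk
    by_cases hkg : k = g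
    · exact Or.inr (Or.inl ⟨hkg, hnm⟩)
    · exact Or.inl (hn k ⟨hk, hkg⟩)

theorem statement9 {G M : Type*} (I : G → M → Prop) (m : M) (g : G)
    (hg : ¬ I g m) (S : Set G) (hS : MixGen I {h : G | ¬ I h m} S) :
    ¬ MixGen (opRel I g m) {h : G | ¬ I h m} S ↔
      ∃! h : G, h ∈ {h : G | ¬ I h m} ∧ h ≠ g ∧
        S ∩ {h : G | ¬ I h m} = {h} ∧
        intentOf (opRel I g m) (S \ {h}) = intentOf I S ∪ {m} := by
  constructor
  · intro hnot
    obtain ⟨h, hh⟩ := not_forall.mp hnot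
    rw [not_and_or] at hh
    rcases hh with hh | hh
    · push_neg at hh
      obtain ⟨hmem, hcl⟩ := hh
      have hint := (cl_eq_iff (opRel I g m)).mp hcl
      by_cases hgS : g ∈ S
      · exfalso
        by_cases hhg : h = g
        · rw [hhg] at hint
          have hg1 : g ∉ S \ ({g} : Set G) := fun hx => hx.2 rfl
          rw [intentJ_of_not_mem I g m hg1, intentJ_of_mem I hg hgS] at hint
          have : m ∈ intentOf I (S \ {g}) \ {m} := hint ▸ Or.inr rfl
          exact this.2 rfl
        · have hgSh : g ∈ S \ ({h} : Set G) := ⟨hgS, fun e => hhg e.symm⟩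
          rw [intentJ_of_mem I hg hgSh, intentJ_of_mem I hg hgS] at hint
          have hK : intentOf I (S \ {h}) = intentOf I S := by
            apply Set.Subset.antisymm
            · intro n hn
              have hgn : I g n := hn g hgSh
              have hnm : n ≠ m := fun e => hg (e ▸ hgn)
              have h1 : n ∈ intentOf I ((S \ {h}) \ {g}) \ {m} :=
                ⟨intent_mono I Set.diff_subset hn, hnm⟩
              rw [hint] at h1
              intro k hk
              by_cases hkg : k = g
              · exact hkg ▸ hgn
              · exact h1.1 k ⟨hk, hkg⟩
            · exact intent_mono I Set.diff_subset
          exact (hS h).1 hmem ((cl_eq_iff I).mpr hK)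
      · have hg1 : g ∉ S \ ({h} : Set G) := fun hx => hgS hx.1
        rw [intentJ_of_not_mem I g m hg1, intentJ_of_not_mem I g m hgS] at hint
        have hne : intentOf I (S \ {h}) ≠ intentOf I S :=
          fun e => (hS h).1 hmem ((cl_eq_iff I).mpr e)
        have hsub : intentOf I S ⊆ intentOf I (S \ {h}) := intent_mono I Set.diff_subset
        have hnsub : ¬ intentOf I (S \ {h}) ⊆ intentOf I S :=
          fun hs => hne (Set.Subset.antisymm hs hsub)
        obtain ⟨n, hn1, hn2⟩ := Set.not_subset.mp hnsub
        have hnm : n ∈ intentOf I S ∪ {m} := hint ▸ Or.inl hn1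
        have hmm : m ∈ intentOf I (S \ {h}) := by
          rcases hnm with hnm | hnm
          · exact absurd hnm hn2
          · exact hnm ▸ hn1
        have hIeq : intentOf I (S \ {h}) = intentOf I S ∪ {m} := by
          apply Set.Subset.antisymm
          · intro x hx
            have : x ∈ intentOf I (S \ {h}) ∪ {m} := Or.inl hx
            rwa [hint] at this
          · rintro x (hx | hx)
            · exact hsub hx
            · exact hx ▸ hmm
        have hSR : S ∩ {h : G | ¬ I h m} = {h} := by
          ext k
          constructor
          · rintro ⟨hkS, hkR⟩
            by_contra hk
            exact hkR (hmm k ⟨hkS, hk⟩)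
          · rintro rfl
            exact hmem
        refine ⟨h, ⟨hmem.2, fun e => hgS (e ▸ hmem.1), hSR, ?_⟩, ?_⟩
        · rw [intentJ_of_not_mem I g m hg1, hIeq, Set.union_assoc, Set.union_self]
        · rintro h2 ⟨-, -, hSR2, -⟩
          exact Set.singleton_eq_singleton_iff.mp (hSR2.symm.trans hSR)
    · exfalso
      push_neg at hh
      obtain ⟨hmem, hcl⟩ := hh
      have hhS : h ∉ S := fun h' => hmem (Or.inl h')
      have hhm : I h m := not_not.mp (fun h' => hmem (Or.inr h'))
      have hhg : h ≠ g := fun e => hmem (Or.inr (show ¬ I h m from e ▸ hg))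
      have hint := (cl_eq_iff (opRel I g m)).mp hcl
      by_cases hgS : g ∈ S
      · have hgU : g ∈ S ∪ ({h} : Set G) := Or.inl hgS
        rw [intentJ_of_mem I hg hgU, intentJ_of_mem I hg hgS] at hint
        have hK : intentOf I (S ∪ {h}) = intentOf I S := by
          apply Set.Subset.antisymm
          · exact intent_mono I Set.subset_union_left
          · intro n hn
            have hgn : I g n := hn g hgS
            have hnm : n ≠ m := fun e => hg (e ▸ hgn)
            have h1 : n ∈ intentOf I (S \ {g}) \ {m} :=
              ⟨intent_mono I Set.diff_subset hn, hnm⟩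
            rw [← hint] at h1
            intro k hk
            by_cases hkg : k = g
            · exact hkg ▸ hgn
            · exact h1.1 k ⟨hk, hkg⟩
        exact (hS h).2 hmem ((cl_eq_iff I).mpr hK)
      · have hgU : g ∉ S ∪ ({h} : Set G) := by
          rintro (h' | h')
          · exact hgS h'
          · exact hhg h'.symm
        rw [intentJ_of_not_mem I g m hgU, intentJ_of_not_mem I g m hgS] at hint
        have hne : intentOf I (S ∪ {h}) ≠ intentOf I S :=
          fun e => (hS h).2 hmem ((cl_eq_iff I).mpr e)
        have hsub : intentOf I (S ∪ {h}) ⊆ intentOf I S :=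
          intent_mono I Set.subset_union_left
        have hnsub : ¬ intentOf I S ⊆ intentOf I (S ∪ {h}) :=
          fun hs => hne (Set.Subset.antisymm hsub hs)
        obtain ⟨n, hn1, hn2⟩ := Set.not_subset.mp hnsub
        have hnm : n ∈ intentOf I (S ∪ {h}) ∪ {m} := hint ▸ Or.inl hn1
        have hnm' : n = m := by
          rcases hnm with hnm | hnm
          · exact absurd hnm hn2
          · exact hnm
        subst hnm'
        apply hn2
        rintro k (hk | hk)
        · exact hn1 k hk
        · exact hk ▸ hhm
  · rintro ⟨h, ⟨hR, hhg, hSR, hint⟩, -⟩ hMG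
    have hgS : g ∉ S := by
      intro hgS
      have : g ∈ S ∩ {h : G | ¬ I h m} := ⟨hgS, hg⟩
      rw [hSR] at this
      exact hhg this.symm
    have hhS : h ∈ S ∩ {h : G | ¬ I h m} := by
      have : h ∈ ({h} : Set G) := rfl
      rwa [← hSR] at this
    have hg1 : g ∉ S \ ({h} : Set G) := fun hx => hgS hx.1
    have hiJ : intentOf (opRel I g m) (S \ {h}) = intentOf (opRel I g m) S :=
      hint.trans (intentJ_of_not_mem I g m hgS).symm
    exact (hMG h).1 hhS ((cl_eq_iff (opRel I g m)).mpr hiJ)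
end

section
/- Let K = (G, M, I) be a formal context, m ∈ M, R = G \ m', g ∈ R, and L = op^{g,m}(K) with derivation (·)^J. Suppose S ⊆ G is an R-mixed generator of both K and L such that R ⊆ S, S^J ≠ S', and (S ∪ {g})^J ≠ S' (i.e., S ∈ C^R). Then χ(S \ R) = R. -/
theorem statement10 {G M : Type*} (I : G → M → Prop) (m : M) (g : G)
    (hg : ¬ I g m) (S : Set G)
    (hK : MixGen I {h : G | ¬ I h m} S)
    (hL : MixGen (opRel I g m) {h : G | ¬ I h m} S)
    (hR : {h : G | ¬ I h m} ⊆ S)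
    (h1 : intentOf (opRel I g m) S ≠ intentOf I S)
    (h2 : intentOf (opRel I g m) (S ∪ {g}) ≠ intentOf I S) :
    chi I m (S \ {h : G | ¬ I h m}) = {h : G | ¬ I h m} := by

  have hgS : g ∈ S := hR hg
  ext h
  simp only [chi, Set.mem_setOf_eq]
  constructor
  · rintro ⟨hhm, -⟩; exact hhm
  · intro hhm
    refine ⟨hhm, ?_⟩
    by_cases hhg : h = g
    · subst hhg
      -- use h1 (here h = g)
      obtain ⟨n, hn⟩ : ∃ n, ¬ (n ∈ intentOf (opRel I h m) S ↔ n ∈ intentOf I S) := by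
        by_contra hcon
        push_neg at hcon
        exact h1 (Set.ext fun n => (hcon n))
      by_cases hnm : n = m
      · exfalso
        apply hn
        rw [hnm]
        constructor
        · intro hA
          exact absurd (hA h hgS) (by simp [opRel, hhm])
        · intro hB
          exact absurd (hB h hgS) hhm
      · -- n ≠ m
        have hBA : (n ∈ intentOf I S) → n ∈ intentOf (opRel I h m) S := by
          intro hB t ht
          exact Or.inl (hB t ht)
        have hA : n ∈ intentOf (opRel I h m) S := by
          by_contra hA
          exact hn ⟨fun h' => absurd h' hA, fun hB => absurd (hBA hB) hA⟩
        have hB : ¬ n ∈ intentOf I S := fun hB => hn ⟨fun _ => hB, hBA⟩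
        obtain ⟨t, htS, htn⟩ : ∃ t ∈ S, ¬ I t n := by
          by_contra hc
          push_neg at hc
          exact hB hc
        have htg : t = h := by
          rcases hA t htS with h' | ⟨h', -⟩ | ⟨-, h'⟩
          · exact absurd h' htn
          · exact h'
          · exact absurd h' hnm
        refine ⟨n, ?_, htg ▸ htn, hnm⟩
        intro s hs
        rcases hA s hs.1 with h' | ⟨rfl, -⟩ | ⟨-, h'⟩
        · exact h'
        · exact absurd hhm hs.2
        · exact absurd h' hnm
    · -- h ≠ g: use hK
      have hcl : cl I (S \ {h}) ≠ cl I S := (hK h).1 ⟨hR hhm, hhm⟩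
      have hint : intentOf I (S \ {h}) ≠ intentOf I S := by
        intro he
        exact hcl (by unfold cl; rw [he])
      obtain ⟨n, hn⟩ : ∃ n, ¬ (n ∈ intentOf I (S \ {h}) ↔ n ∈ intentOf I S) := by
        by_contra hcon
        push_neg at hcon
        exact hint (Set.ext fun n => (hcon n))
      have hBA : (n ∈ intentOf I S) → n ∈ intentOf I (S \ {h}) :=
        fun hB t ht => hB t ht.1
      have hA : n ∈ intentOf I (S \ {h}) := by
        by_contra hA
        exact hn ⟨fun h' => absurd h' hA, fun hB => absurd (hBA hB) hA⟩
      have hB : ¬ n ∈ intentOf I S := fun hB => hn ⟨fun _ => hB, hBA⟩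
      have hhn : ¬ I h n := by
        intro hhn
        apply hB
        intro t ht
        by_cases hth : t = h
        · exact hth ▸ hhn
        · exact hA t ⟨ht, hth⟩
      have hgn : I g n := hA g ⟨hgS, hhg ∘ Eq.symm⟩
      refine ⟨n, ?_, hhn, fun hnm => hg (hnm ▸ hgn)⟩
      intro s hs
      have : s ≠ h := fun he => hs.2 (he ▸ hhm)
      exact hA s ⟨hs.1, this⟩
end

section
/- Let K = (G, M, I) be a formal context, m ∈ M, R = G \ m', g ∈ R, and L = op^{g,m}(K). If S ⊆ G is an R-mixed generator of K that is not an R-mixed generator of L (i.e., S ∈ N), then χ(S \ R) ≠ R. -/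
theorem statement11 {G M : Type*} (I : G → M → Prop) (m : M) (g : G)
    (hg : ¬ I g m) (S : Set G)
    (hK : MixGen I {h : G | ¬ I h m} S)
    (hN : ¬ MixGen (opRel I g m) {h : G | ¬ I h m} S) :
    chi I m (S \ {h : G | ¬ I h m}) ≠ {h : G | ¬ I h m} := by
  intro hchi
  apply hN
  intro h
  refine ⟨?_, ?_⟩
  · rintro ⟨hS, hR⟩ heq
    have hR' : ¬ I h m := hR
    by_cases hhg : h = g
    · subst hhg
      have h1 : h ∈ cl (opRel I h m) S := fun n hn => hn h hS
      rw [← heq] at h1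
      have hm : m ∈ intentOf (opRel I h m) (S \ {h}) := by
        intro k hk
        exact Or.inr (Or.inr ⟨hk.2, rfl⟩)
      rcases h1 m hm with h2 | h2 | h2
      · exact hg h2
      · exact h2.2 rfl
      · exact h2.1 rfl
    · have key : ∃ n, (∀ k ∈ S \ ({h} : Set G), I k n) ∧ ¬ I h n ∧ n ≠ m := by
        by_cases hcase : ∀ k ∈ S \ ({h} : Set G), I k m
        · have hh := (Set.ext_iff.mp hchi h).mpr hR
          obtain ⟨-, n, hn1, hn2, hn3⟩ := hh
          exact ⟨n, fun k hk => hn1 k ⟨hk.1, fun hkm => hkm (hcase k hk)⟩, hn2, hn3⟩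
        · push_neg at hcase
          have hne := (hK h).1 ⟨hS, hR⟩
          have hnc : h ∉ cl I (S \ {h}) := by
            intro hmem
            apply hne
            have hint : intentOf I (S \ {h}) = intentOf I S := by
              apply Set.Subset.antisymm
              · intro n hn k hk
                by_cases e : k = h
                · subst e; exact hmem n hn
                · exact hn k ⟨hk, e⟩
              · intro n hn k hk
                exact hn k hk.1
            unfold cl
            rw [hint]
          simp only [cl, extentOf, intentOf, Set.mem_setOf_eq] at hnc
          push_neg at hnc
          obtain ⟨n, hn1, hn2⟩ := hnc
          refine ⟨n, hn1, hn2, ?_⟩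
          rintro rfl
          obtain ⟨k, hk, hkm⟩ := hcase
          exact hkm (hn1 k hk)
      obtain ⟨n, hn1, hn2, hn3⟩ := key
      have h1 : h ∈ cl (opRel I g m) S := fun n' hn' => hn' h hS
      rw [← heq] at h1
      rcases h1 n (fun k hk => Or.inl (hn1 k hk)) with h2 | h2 | h2
      · exact hn2 h2
      · exact hhg h2.1
      · exact hn3 h2.2
  · intro hns heq
    have hIm : I h m := by
      by_contra hc
      exact hns (Or.inr hc)
    have hhg : h ≠ g := fun e => hg (e ▸ hIm)
    have hne := (hK h).2 hns
    have hnc : h ∉ cl I S := by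
      intro hmem
      apply hne
      have hint : intentOf I (S ∪ {h}) = intentOf I S := by
        apply Set.Subset.antisymm
        · intro n hn k hk
          exact hn k (Or.inl hk)
        · intro n hn k hk
          rcases hk with hk | hk
          · exact hn k hk
          · have e : k = h := hk
            subst e; exact hmem n hn
      unfold cl
      rw [hint]
    simp only [cl, extentOf, intentOf, Set.mem_setOf_eq] at hnc
    push_neg at hnc
    obtain ⟨n, hn1, hn2⟩ := hnc
    have hn3 : n ≠ m := fun e => hn2 (e ▸ hIm)
    have h1 : h ∈ cl (opRel I g m) (S ∪ {h}) := fun n' hn' => hn' h (Or.inr rfl)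
    rw [heq] at h1
    rcases h1 n (fun k hk => Or.inl (hn1 k hk)) with h2 | h2 | h2
    · exact hn2 h2
    · exact hhg h2.1
    · exact hn3 h2.2
end

section
/- Let K = (G, M, I) be a formal context, m ∈ M, R = G \ m', g ∈ R, L = op^{g,m}(K) with derivation (·)^J, and let S be an R-mixed generator of both K and L. Then: if S^J = S' (case S ∈ A), then additionally (S ∪ {g})^J = S' \ {m} whenever g ∉ S; if S^J ≠ S' and (S ∪ {g})^J = S' (case S ∈ B), then S^J = S' ∪ {m}, and moreover S' ∪ {m} is not an intent of K; and if S^J = S', g ∉ S and χ(S) = R (case S ∈ A^{χ=R}), then S' \ {m} is not an intent of K. -/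
/-- `T' = T'''`. -/
lemma intent_extent_intent {G M : Type*} (I : G → M → Prop) (T : Set G) :
    intentOf I (extentOf I (intentOf I T)) = intentOf I T := by
  apply Set.Subset.antisymm
  · intro n hn h hh
    exact hn h (fun k hk => hk h hh)
  · intro n hn h hh
    exact hh n hn

/-- If `g ∉ S` then `S^J = S' ∪ {m}`. -/
lemma opRel_intent_of_not_mem {G M : Type*} {I : G → M → Prop} {m : M} {g : G}
    (hg : ¬ I g m) {S : Set G} (hgS : g ∉ S) :
    intentOf (opRel I g m) S = intentOf I S ∪ {m} := by
  ext n
  constructor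
  · intro hn
    by_cases hnm : n = m
    · exact Or.inr hnm
    · refine Or.inl (fun h hh => ?_)
      rcases hn h hh with h1 | ⟨rfl, _⟩ | ⟨_, h3⟩
      · exact h1
      · exact absurd hh hgS
      · exact absurd h3 hnm
  · rintro (hn | rfl)
    · intro h hh; exact Or.inl (hn h hh)
    · intro h hh
      exact Or.inr (Or.inr ⟨fun e => hgS (e ▸ hh), rfl⟩)

/-- If `g ∉ S` then `(S ∪ {g})^J = S' \ {m}`. -/
lemma opRel_intent_union_g {G M : Type*} {I : G → M → Prop} {m : M} {g : G}
    (hg : ¬ I g m) {S : Set G} (hgS : g ∉ S) :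
    intentOf (opRel I g m) (S ∪ {g}) = intentOf I S \ {m} := by
  ext n
  constructor
  · intro hn
    have hgn := hn g (Or.inr rfl)
    have hnm : n ≠ m := by
      rcases hgn with h1 | ⟨_, h2⟩ | ⟨h3, _⟩
      · intro e; exact hg (e ▸ h1)
      · exact h2
      · exact absurd rfl h3
    refine ⟨fun h hh => ?_, hnm⟩
    rcases hn h (Or.inl hh) with h1 | ⟨rfl, _⟩ | ⟨_, h3⟩
    · exact h1
    · exact absurd hh hgS
    · exact absurd h3 hnm
  · rintro ⟨hn, hnm⟩ h hh
    rcases hh with hh | hh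
    · exact Or.inl (hn h hh)
    · exact Or.inr (Or.inl ⟨hh, hnm⟩)

theorem statement14 {G M : Type*} (I : G → M → Prop) (m : M) (g : G)
    (hg : ¬ I g m) (S : Set G)
    (hK : MixGen I {h : G | ¬ I h m} S)
    (hL : MixGen (opRel I g m) {h : G | ¬ I h m} S) :
    -- case S ∈ A
    (intentOf (opRel I g m) S = intentOf I S → g ∉ S →
      intentOf (opRel I g m) (S ∪ {g}) = intentOf I S \ {m}) ∧
    -- case S ∈ B
    ((intentOf (opRel I g m) S ≠ intentOf I S ∧
        intentOf (opRel I g m) (S ∪ {g}) = intentOf I S) →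
      intentOf (opRel I g m) S = intentOf I S ∪ {m} ∧
      ¬ ∃ T : Set G, intentOf I T = intentOf I S ∪ {m}) ∧
    -- case S ∈ A^{χ = R}
    ((intentOf (opRel I g m) S = intentOf I S ∧ g ∉ S ∧
        chi I m S = {h : G | ¬ I h m}) →
      ¬ ∃ T : Set G, intentOf I T = intentOf I S \ {m}) := by
  refine ⟨fun _ hgS => opRel_intent_union_g hg hgS, ?_, ?_⟩
  · rintro ⟨hne, heq⟩
    -- g ∉ S
    have hgS : g ∉ S := by
      intro hgS
      have hu : S ∪ {g} = S := Set.union_eq_left.mpr (Set.singleton_subset_iff.mpr hgS)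
      rw [hu] at heq
      exact hne heq
    have hSJ : intentOf (opRel I g m) S = intentOf I S ∪ {m} :=
      opRel_intent_of_not_mem hg hgS
    refine ⟨hSJ, ?_⟩
    -- m ∉ S'
    have hm : m ∉ intentOf I S := by
      intro hmS
      apply hne
      rw [hSJ, Set.union_eq_left.mpr (Set.singleton_subset_iff.mpr hmS)]
    rintro ⟨T, hT⟩
    -- E := extent of S' ∪ {m}; E' = S' ∪ {m}
    set N : Set M := intentOf I S ∪ {m} with hN
    set E : Set G := extentOf I N with hEdef
    have hE : intentOf I E = N := by
      rw [hEdef, ← hT]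
      exact intent_extent_intent I T
    -- E ⊆ S, using MixGen K (ii)
    have hES : E ⊆ S := by
      intro h hh
      by_contra hhS
      have hhm : I h m := hh m (Or.inr rfl)
      have hhR : h ∉ S ∪ {h' : G | ¬ I h' m} := by
        rintro (c | c)
        · exact hhS c
        · exact c hhm
      apply (hK h).2 hhR
      have hint : intentOf I (S ∪ {h}) = intentOf I S := by
        apply Set.Subset.antisymm
        · intro n hn k hk; exact hn k (Or.inl hk)
        · intro n hn k hk
          rcases hk with hk | hk
          · exact hn k hk
          · rw [Set.mem_singleton_iff] at hk
            subst hk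
            exact hh n (Or.inl hn)
      simp only [cl, hint]
    -- pick h₀ ∈ S with ¬ I h₀ m
    have hSm : ∃ h₀ ∈ S, ¬ I h₀ m := by
      by_contra hc
      push_neg at hc
      exact hm (fun h hh => hc h hh)
    obtain ⟨h₀, hh₀S, hh₀m⟩ := hSm
    -- E ⊆ S \ {h₀}
    have hE0 : E ⊆ S \ {h₀} := by
      intro k hk
      refine ⟨hES hk, fun e => ?_⟩
      rw [Set.mem_singleton_iff] at e
      subst e
      exact hh₀m (hk m (Or.inr rfl))
    -- (S \ {h₀})' ⊆ N
    have hsub : intentOf I (S \ {h₀}) ⊆ N := by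
      intro n hn
      rw [← hE]
      exact fun k hk => hn k (hE0 hk)
    have hg0 : g ∉ S \ {h₀} := fun c => hgS c.1
    -- (S \ {h₀})^J = S^J
    have hJeq : intentOf (opRel I g m) (S \ {h₀}) = intentOf (opRel I g m) S := by
      rw [opRel_intent_of_not_mem hg hg0, hSJ]
      apply Set.Subset.antisymm
      · rintro n (hn | hn)
        · exact hsub hn
        · exact Or.inr hn
      · rintro n (hn | hn)
        · exact Or.inl (fun k hk => hn k hk.1)
        · exact Or.inr hn
    exact (hL h₀).1 ⟨hh₀S, hh₀m⟩ (by simp only [cl, hJeq])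
  · rintro ⟨-, -, hchi⟩ ⟨T, hT⟩
    set F : Set G := extentOf I (intentOf I S \ {m}) with hFdef
    have hF : intentOf I F = intentOf I S \ {m} := by
      rw [hFdef, ← hT]
      exact intent_extent_intent I T
    have hFm : ∀ h ∈ F, I h m := by
      intro h hh
      by_contra hhm
      have hc : h ∈ chi I m S := by rw [hchi]; exact hhm
      obtain ⟨-, n, hnS, hhn, hnm⟩ := hc
      exact hhn (hh n ⟨hnS, hnm⟩)
    have : m ∈ intentOf I S \ {m} := by
      rw [← hF]
      exact fun h hh => hFm h hh
    exact this.2 rfl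
end

section
/- Let K = (G, M, I) be a formal context with G and M finite, m ∈ M, R = G \ m', g ∈ R, L = op^{g,m}(K) with derivation (·)^J, and let 𝒮 be a complete representative system of R-mixed generators of K. Partition 𝒮 = N ∪ A ∪ B ∪ C where N = {S ∈ 𝒮 | S is not an R-mixed generator of L}, A = {S ∈ 𝒮 \ N | S^J = S'}, B = {S ∈ 𝒮 \ N | S^J ≠ S' and (S ∪ {g})^J = S'}, C = {S ∈ 𝒮 \ N | S^J ≠ S' and (S ∪ {g})^J ≠ S'}, and let C^{¬R} = {S ∈ C | R ⊄ S}. Then the number of concepts of L is at least (number of concepts of K) + |B| − |C^{¬R}|. -/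
namespace FCA15

variable {G M : Type*}

section basic
variable (I : G → M → Prop)

lemma mem_intent {S : Set G} {n : M} : n ∈ intentOf I S ↔ ∀ x ∈ S, I x n := Iff.rfl
lemma mem_extent {B : Set M} {x : G} : x ∈ extentOf I B ↔ ∀ n ∈ B, I x n := Iff.rfl

lemma subset_cl (S : Set G) : S ⊆ cl I S := fun x hx n hn => hn x hx

lemma intent_anti {S T : Set G} (h : S ⊆ T) : intentOf I T ⊆ intentOf I S :=
  fun _ hn x hx => hn x (h hx)

lemma extent_anti {B C : Set M} (h : B ⊆ C) : extentOf I C ⊆ extentOf I B :=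
  fun _ hx n hn => hx n (h hn)

lemma intent_cl (S : Set G) : intentOf I (cl I S) = intentOf I S := by
  apply le_antisymm
  · exact intent_anti I (subset_cl I S)
  · exact fun n hn x hx => hx n hn

lemma cl_cl (S : Set G) : cl I (cl I S) = cl I S := by
  have h := intent_cl I S
  unfold cl at h ⊢
  rw [h]

lemma isExtent_cl (S : Set G) : IsExtent I (cl I S) := cl_cl I S

lemma cl_mono {S T : Set G} (h : S ⊆ T) : cl I S ⊆ cl I T :=
  extent_anti I (intent_anti I h)

lemma cl_of_intent_eq {S T : Set G} (h : intentOf I S = intentOf I T) :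
    cl I S = cl I T := by unfold cl; rw [h]

lemma intent_eq_of_cl_eq {S T : Set G} (h : cl I S = cl I T) :
    intentOf I S = intentOf I T := by
  rw [← intent_cl I S, ← intent_cl I T, h]

lemma cl_eq_of_between {S T : Set G} (h1 : S ⊆ T) (h2 : T ⊆ cl I S) :
    cl I T = cl I S := by
  apply le_antisymm
  · rw [← cl_cl I S]; exact cl_mono I h2
  · exact cl_mono I h1

lemma mem_cl_of_intent_subset {S : Set G} {x : G}
    (h : intentOf I S ⊆ {n | I x n}) : x ∈ cl I S := fun n hn => h hn

end basic

section mixgen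
variable {I : G → M → Prop} {R S : Set G}

lemma mixgen_add (h : MixGen I R S) {x : G} (hxS : x ∉ S) (hxR : x ∉ R)
    (he : cl I (S ∪ {x}) = cl I S) : False :=
  (h x).2 (fun hx => hx.elim hxS hxR) he

lemma mixgen_rem (h : MixGen I R S) {x : G} (hxS : x ∈ S) (hxR : x ∈ R)
    (he : cl I (S \ {x}) = cl I S) : False :=
  (h x).1 ⟨hxS, hxR⟩ he

lemma mixgen_mem_of_mem_cl (h : MixGen I R S) {x : G} (hx : x ∈ cl I S)
    (hxR : x ∉ R) : x ∈ S := by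
  by_contra hxS
  exact mixgen_add h hxS hxR (cl_eq_of_between I (Set.subset_union_left)
    (Set.union_subset (subset_cl I S) (by simpa using hx)))

end mixgen
section jstruct
variable (I : G → M → Prop) (m : M) (g : G)

/-- The `m`-free part of the intent of `X \ {g}`. -/
def Yf (X : Set G) : Set M := intentOf I (X \ {g}) \ {m}

lemma m_not_mem_Yf {X : Set G} : m ∉ Yf I m g X := fun h => h.2 rfl

variable {I m g}

lemma m_mem_intentJ (hg : ¬ I g m) {X : Set G} :
    m ∈ intentOf (opRel I g m) X ↔ g ∉ X := by
  constructor
  · intro h hgX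
    rcases h g hgX with h' | h' | h'
    · exact hg h'
    · exact h'.2 rfl
    · exact h'.1 rfl
  · intro h x hx
    exact Or.inr (Or.inr ⟨fun he => h (he ▸ hx), rfl⟩)

lemma mem_intentJ_ne {X : Set G} {n : M} (hn : n ≠ m) :
    n ∈ intentOf (opRel I g m) X ↔ n ∈ intentOf I (X \ {g}) := by
  constructor
  · intro h x hx
    rcases h x hx.1 with h' | h' | h'
    · exact h'
    · exact absurd h'.1 hx.2
    · exact absurd h'.2 hn
  · intro h x hx
    by_cases hxg : x = g
    · exact Or.inr (Or.inl ⟨hxg, hn⟩)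
    · exact Or.inl (h x ⟨hx, hxg⟩)

lemma intentJ_sdiff {X : Set G} :
    intentOf (opRel I g m) X \ {m} = Yf I m g X := by
  ext n
  by_cases hn : n = m
  · simp [hn, Yf, m_not_mem_Yf]
  · simp only [Set.mem_diff, Set.mem_singleton_iff, hn, not_false_iff, and_true, Yf]
    exact mem_intentJ_ne hn

lemma intentJ_of_mem (hg : ¬ I g m) {X : Set G} (hgX : g ∈ X) :
    intentOf (opRel I g m) X = Yf I m g X := by
  rw [← intentJ_sdiff]
  have : m ∉ intentOf (opRel I g m) X := fun h => (m_mem_intentJ hg).1 h hgX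
  ext n; simp only [Set.mem_diff, Set.mem_singleton_iff]
  exact ⟨fun h => ⟨h, fun he => this (he ▸ h)⟩, fun h => h.1⟩

lemma intentJ_of_not_mem (hg : ¬ I g m) {X : Set G} (hgX : g ∉ X) :
    intentOf (opRel I g m) X = Yf I m g X ∪ {m} := by
  ext n
  by_cases hn : n = m
  · subst hn
    simp only [Set.mem_union, Set.mem_singleton_iff, or_true, iff_true]
    exact (m_mem_intentJ hg).2 hgX
  · rw [← intentJ_sdiff]
    simp [hn, Set.mem_diff]

lemma g_mem_clJ (hg : ¬ I g m) {X : Set G} :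
    g ∈ cl (opRel I g m) X ↔ g ∈ X := by
  constructor
  · intro h
    by_contra hgX
    have hm : m ∈ intentOf (opRel I g m) X := (m_mem_intentJ hg).2 hgX
    rcases h m hm with h' | h' | h'
    · exact hg h'
    · exact h'.2 rfl
    · exact h'.1 rfl
  · intro h
    intro n hn
    by_cases hnm : n = m
    · exact absurd h ((m_mem_intentJ hg).1 (hnm ▸ hn))
    · exact Or.inr (Or.inl ⟨rfl, hnm⟩)

lemma mem_clJ_ne {X : Set G} {x : G} (hx : x ≠ g) :
    x ∈ cl (opRel I g m) X ↔ x ∈ extentOf I (Yf I m g X) := by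
  constructor
  · intro h n hn
    rw [← intentJ_sdiff] at hn
    rcases h n hn.1 with h' | h' | h'
    · exact h'
    · exact absurd h'.1 hx
    · exact absurd h'.2 hn.2
  · intro h n hn
    by_cases hnm : n = m
    · exact Or.inr (Or.inr ⟨hx, hnm⟩)
    · refine Or.inl (h n ?_)
      rw [← intentJ_sdiff]
      exact ⟨hn, hnm⟩

lemma intentJ_eq_iff (hg : ¬ I g m) {X X' : Set G} :
    intentOf (opRel I g m) X = intentOf (opRel I g m) X' ↔
      ((g ∈ X ↔ g ∈ X') ∧ Yf I m g X = Yf I m g X') := by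
  constructor
  · intro h
    constructor
    · rw [← not_iff_not, ← m_mem_intentJ hg, ← m_mem_intentJ hg, h]
    · rw [← intentJ_sdiff, ← intentJ_sdiff, h]
  · rintro ⟨hbit, hY⟩
    by_cases hgX : g ∈ X
    · rw [intentJ_of_mem hg hgX, intentJ_of_mem hg (hbit.1 hgX), hY]
    · rw [intentJ_of_not_mem hg hgX, intentJ_of_not_mem hg (fun h => hgX (hbit.2 h)), hY]

lemma intent_of_mem_g (hg : ¬ I g m) {S : Set G} (hgS : g ∈ S) :
    intentOf I S = Yf I m g S ∩ {n | I g n} := by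
  ext n
  constructor
  · intro h
    have hgn : I g n := h g hgS
    exact ⟨⟨fun x hx => h x hx.1, fun he => hg (he ▸ hgn)⟩, hgn⟩
  · rintro ⟨⟨h1, _⟩, h2⟩ x hx
    by_cases hxg : x = g
    · exact hxg ▸ h2
    · exact h1 x ⟨hx, hxg⟩

lemma Yf_of_not_mem {S : Set G} (hgS : g ∉ S) :
    Yf I m g S = intentOf I S \ {m} := by
  unfold Yf
  rw [Set.diff_singleton_eq_self hgS]

lemma Yf_union_g {S : Set G} : Yf I m g (S ∪ {g}) = Yf I m g S := by
  unfold Yf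
  rw [Set.union_diff_right]

lemma intent_diff_subset_Yf {S : Set G} : intentOf I S \ {m} ⊆ Yf I m g S :=
  fun _ hn => ⟨intent_anti I Set.diff_subset hn.1, hn.2⟩

end jstruct

section classes
variable {I : G → M → Prop} {m : M} {g : G}

lemma Yf_eq_of_clJ_eq (hg : ¬ I g m) {X X' : Set G}
    (h : cl (opRel I g m) X = cl (opRel I g m) X') : Yf I m g X = Yf I m g X' :=
  ((intentJ_eq_iff hg).1 (intent_eq_of_cl_eq _ h)).2

/-- A K-mixed generator containing `g` is an L-mixed generator. -/
lemma Lmix_of_mem_g (hg : ¬ I g m) {S : Set G}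
    (hK : MixGen I {h : G | ¬ I h m} S) (hgS : g ∈ S) :
    MixGen (opRel I g m) {h : G | ¬ I h m} S := by
  intro h
  constructor
  · rintro ⟨hhS, hhR⟩ heq
    by_cases hhg : h = g
    · have h1 : g ∈ cl (opRel I g m) S := (g_mem_clJ hg).2 hgS
      rw [← heq] at h1
      exact ((g_mem_clJ hg).1 h1).2 (Set.mem_singleton_iff.2 hhg.symm)
    · have hgS' : g ∈ S \ {h} := ⟨hgS, fun he => hhg (he.symm)⟩
      have hY : Yf I m g (S \ {h}) = Yf I m g S := Yf_eq_of_clJ_eq hg heq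
      have hit : intentOf I (S \ {h}) = intentOf I S := by
        rw [intent_of_mem_g hg hgS', intent_of_mem_g hg hgS, hY]
      exact mixgen_rem hK hhS hhR (cl_of_intent_eq I hit)
  · intro hh heq
    have hhS : h ∉ S := fun hc => hh (Or.inl hc)
    have hhg : h ≠ g := fun he => hhS (he ▸ hgS)
    have hgS' : g ∈ S ∪ {h} := Or.inl hgS
    have hY : Yf I m g (S ∪ {h}) = Yf I m g S := Yf_eq_of_clJ_eq hg heq
    have hit : intentOf I (S ∪ {h}) = intentOf I S := by
      rw [intent_of_mem_g hg hgS', intent_of_mem_g hg hgS, hY]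
    exact mixgen_add hK hhS (fun hc => hh (Or.inr hc)) (cl_of_intent_eq I hit)

/-- A K-mixed generator avoiding `g` whose intent contains `m` is an L-mixed generator. -/
lemma NA_lemma (hg : ¬ I g m) {S : Set G}
    (hK : MixGen I {h : G | ¬ I h m} S) (hgS : g ∉ S) (hm : m ∈ intentOf I S) :
    MixGen (opRel I g m) {h : G | ¬ I h m} S := by
  intro h
  constructor
  · rintro ⟨hhS, hhR⟩ _
    exact hhR (hm h hhS)
  · intro hh heq
    have hhm : I h m := of_not_not (fun hc => hh (Or.inr hc))
    have hhS : h ∉ S := fun hc => hh (Or.inl hc)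
    have hhg : h ≠ g := fun he => hg (he ▸ hhm)
    have hgS' : g ∉ S ∪ {h} := by
      rintro (hc | hc)
      · exact hgS hc
      · exact hhg (Set.mem_singleton_iff.1 hc).symm
    have hY : Yf I m g (S ∪ {h}) = Yf I m g S := Yf_eq_of_clJ_eq hg heq
    rw [Yf_of_not_mem hgS', Yf_of_not_mem hgS] at hY
    have hmm : m ∈ intentOf I (S ∪ {h}) := by
      rintro x (hx | hx)
      · exact hm x hx
      · exact (Set.mem_singleton_iff.1 hx) ▸ hhm
    have hit : intentOf I (S ∪ {h}) = intentOf I S := by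
      ext n
      by_cases hn : n = m
      · subst hn
        exact ⟨fun _ => hm, fun _ => hmm⟩
      · constructor
        · intro h1
          exact (Set.ext_iff.1 hY n).1 ⟨h1, hn⟩ |>.1
        · intro h1
          exact ((Set.ext_iff.1 hY n).2 ⟨h1, hn⟩).1
    exact mixgen_add hK hhS (fun hc => hh (Or.inr hc)) (cl_of_intent_eq I hit)

/-- Case A0 versus B0 is impossible. -/
lemma Gamma1 (hg : ¬ I g m) {S T : Set G}
    (hKS : MixGen I {h : G | ¬ I h m} S) (hKT : MixGen I {h : G | ¬ I h m} T)
    (hLT : MixGen (opRel I g m) {h : G | ¬ I h m} T)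
    (hgS : g ∉ S) (hgT : g ∉ T) (hmS : m ∈ intentOf I S) (hmT : m ∉ intentOf I T)
    (hcl : cl (opRel I g m) S = cl (opRel I g m) T) : False := by
  have hY : Yf I m g S = Yf I m g T := Yf_eq_of_clJ_eq hg hcl
  have hYT : Yf I m g T = intentOf I T := by
    rw [Yf_of_not_mem hgT, Set.diff_singleton_eq_self hmT]
  have hit : intentOf I T = intentOf I S \ {m} := by
    rw [← hYT, ← hY, Yf_of_not_mem hgS]
  have hSsub : S ⊆ T := by
    intro x hxS
    have hxm : I x m := hmS x hxS
    have hxJ : x ∈ cl (opRel I g m) T := hcl ▸ subset_cl _ S hxS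
    exact mixgen_mem_of_mem_cl hLT hxJ (fun hc => hc hxm)
  obtain ⟨h, hhT, hhm⟩ : ∃ x ∈ T, ¬ I x m := by
    by_contra hc
    push_neg at hc
    exact hmT (fun x hx => hc x hx)
  have hSsub' : S ⊆ T \ {h} := fun x hx =>
    ⟨hSsub hx, fun he => hhm ((Set.mem_singleton_iff.1 he) ▸ hmS x hx)⟩
  have h1 : intentOf I (T \ {h}) \ {m} = intentOf I T := by
    apply le_antisymm
    · intro n hn
      rw [hit]
      exact ⟨intent_anti I hSsub' hn.1, hn.2⟩
    · intro n hn
      exact ⟨intent_anti I Set.diff_subset hn, fun he => hmT (he ▸ hn)⟩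
  have hgT' : g ∉ T \ {h} := fun hc => hgT hc.1
  have hJ : intentOf (opRel I g m) (T \ {h}) = intentOf (opRel I g m) T := by
    rw [intentJ_of_not_mem hg hgT', intentJ_of_not_mem hg hgT, Yf_of_not_mem hgT',
      Yf_of_not_mem hgT, h1, Set.diff_singleton_eq_self hmT]
  exact mixgen_rem hLT hhT hhm (cl_of_intent_eq _ hJ)

/-- Case D (no clash) versus N is impossible. -/
lemma H1_lemma (hg : ¬ I g m) {S T : Set G}
    (hKS : MixGen I {h : G | ¬ I h m} S) (hKT : MixGen I {h : G | ¬ I h m} T)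
    (hNT : ¬ MixGen (opRel I g m) {h : G | ¬ I h m} T)
    (hgS : g ∈ S) (hRS : {h : G | ¬ I h m} ⊆ S) (hgT : g ∉ T) (hmT : m ∉ intentOf I T)
    (hY : Yf I m g S = intentOf I T) : False := by
  have hdefect : ∃ h, (h ∈ T ∧ ¬ I h m ∧ cl (opRel I g m) (T \ {h}) = cl (opRel I g m) T)
      ∨ (h ∉ T ∧ I h m ∧ cl (opRel I g m) (T ∪ {h}) = cl (opRel I g m) T) := by
    by_contra hc
    push_neg at hc
    apply hNT
    intro x
    constructor
    · rintro ⟨hxT, hxR⟩ heq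
      exact ((hc x).1 hxT hxR) heq
    · intro hx heq
      exact ((hc x).2 (fun hc' => hx (Or.inl hc'))
        (of_not_not (fun hc' => hx (Or.inr hc')))) heq
  obtain ⟨h, hcase⟩ := hdefect
  rcases hcase with ⟨hhT, hhm, heq⟩ | ⟨hhT, hhm, heq⟩
  · -- removal defect
    have hgT' : g ∉ T \ {h} := fun hc => hgT hc.1
    have hY2 : Yf I m g (T \ {h}) = Yf I m g T := Yf_eq_of_clJ_eq hg heq
    have hYT : Yf I m g T = intentOf I T := by
      rw [Yf_of_not_mem hgT, Set.diff_singleton_eq_self hmT]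
    have hEq : intentOf I (T \ {h}) \ {m} = intentOf I T := by
      rw [← Yf_of_not_mem hgT', hY2, hYT]
    by_cases hmTh : m ∈ intentOf I (T \ {h})
    · have hhg : h ≠ g := fun he => hgT (he ▸ hhT)
      have hitS : intentOf I S ⊆ intentOf I T := by
        rw [intent_of_mem_g hg hgS]
        exact fun n hn => hY ▸ hn.1
      have hsub : T \ {h} ⊆ S := by
        intro x hx
        have hxm : I x m := hmTh x hx
        refine mixgen_mem_of_mem_cl hKS ?_ (fun hc => hc hxm)
        exact fun n hn => (hitS hn) x hx.1
      have hsub2 : T \ {h} ⊆ (S \ {h}) \ {g} := by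
        intro x hx
        exact ⟨⟨hsub hx, hx.2⟩, fun he => hgT ((Set.mem_singleton_iff.1 he) ▸ hx.1)⟩
      have hgSh : g ∈ S \ {h} := ⟨hgS, fun he => hhg ((Set.mem_singleton_iff.1 he).symm)⟩
      have hYS1 : Yf I m g (S \ {h}) ⊆ Yf I m g S := by
        intro n hn
        have h2 : n ∈ intentOf I (T \ {h}) \ {m} := by
          exact ⟨intent_anti I hsub2 hn.1, hn.2⟩
        rw [hEq] at h2
        exact hY ▸ h2
      have hYS2 : Yf I m g S ⊆ Yf I m g (S \ {h}) := by
        intro n hn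
        refine ⟨intent_anti I ?_ hn.1, hn.2⟩
        exact fun x hx => ⟨hx.1.1, hx.2⟩
      have hit : intentOf I (S \ {h}) = intentOf I S := by
        rw [intent_of_mem_g hg hgSh, intent_of_mem_g hg hgS,
          le_antisymm hYS1 hYS2]
      exact mixgen_rem hKS (hRS hhm) hhm (cl_of_intent_eq I hit)
    · have hEq2 : intentOf I (T \ {h}) = intentOf I T := by
        rw [← hEq, Set.diff_singleton_eq_self hmTh]
      exact mixgen_rem hKT hhT hhm (cl_of_intent_eq I hEq2)
  · -- addition defect
    have hhg : h ≠ g := fun he => hg (he ▸ hhm)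
    have hgT' : g ∉ T ∪ {h} := by
      rintro (hc | hc)
      · exact hgT hc
      · exact hhg (Set.mem_singleton_iff.1 hc).symm
    have hY2 : Yf I m g (T ∪ {h}) = Yf I m g T := Yf_eq_of_clJ_eq hg heq
    have hmem : h ∈ cl I T := by
      intro n hn
      by_cases hnm : n = m
      · exact hnm ▸ hhm
      · have h1 : n ∈ Yf I m g T := by
          rw [Yf_of_not_mem hgT]; exact ⟨hn, hnm⟩
        rw [← hY2, Yf_of_not_mem hgT'] at h1
        exact h1.1 h (Or.inr rfl)
    exact hhT (mixgen_mem_of_mem_cl hKT hmem (fun hc => hc hhm))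

end classes

section witness
variable {I : G → M → Prop} {m : M} {g : G}

/-- All facts about the witness `u = (T ∩ m') ∪ {g}` of a (D, B⁺) clash. -/
lemma witness_pack (hg : ¬ I g m) {X T : Set G}
    (hKX : MixGen I {h : G | ¬ I h m} X) (hKT : MixGen I {h : G | ¬ I h m} T)
    (hRT : {h : G | ¬ I h m} ⊆ T)
    (hgX : g ∉ X) (hmX : m ∉ intentOf I X)
    (hYT : Yf I m g T = intentOf I X)
    (hne : cl I X ≠ cl I T) :
    extentOf I (intentOf I ({x ∈ T | I x m} ∪ {g})) = {x ∈ T | I x m} ∪ {g} ∧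
    (∀ V, MixGen I {h : G | ¬ I h m} V → cl I V = {x ∈ T | I x m} ∪ {g} →
      V = {x ∈ T | I x m} ∪ {g}) ∧
    MixGen (opRel I g m) {h : G | ¬ I h m} ({x ∈ T | I x m} ∪ {g}) ∧
    intentOf (opRel I g m) ({x ∈ T | I x m} ∪ {g}) ≠ intentOf I ({x ∈ T | I x m} ∪ {g}) ∧
    ¬ ({h : G | ¬ I h m} ⊆ {x ∈ T | I x m} ∪ {g}) ∧
    (∀ x, ¬ I x m → x ≠ g → ¬ (intentOf I {x ∈ T | I x m} \ {m} ⊆ {n | I x n})) ∧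
    Yf I m g ({x ∈ T | I x m} ∪ {g}) = intentOf I {x ∈ T | I x m} \ {m} := by
  set C0 : Set G := {x ∈ T | I x m} with hC0def
  set u : Set G := C0 ∪ {g} with hudef
  have hgT : g ∈ T := hRT hg
  have hgC0 : g ∉ C0 := fun hc => hg hc.2
  have hgu : g ∈ u := Or.inr rfl
  have hug : u \ {g} = C0 := by
    ext x
    simp only [hudef, Set.union_singleton, Set.mem_diff, Set.mem_insert_iff,
      Set.mem_singleton_iff]
    constructor
    · rintro ⟨h1 | h1, h2⟩
      · exact absurd h1 h2
      · exact h1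
    · intro h1
      exact ⟨Or.inr h1, fun he => hgC0 (he ▸ h1)⟩
  -- P7
  have P7 : Yf I m g u = intentOf I C0 \ {m} := by
    unfold Yf; rw [hug]
  have hitT : intentOf I T = intentOf I X ∩ {n | I g n} := by
    rw [intent_of_mem_g hg hgT, hYT]
  have hnsub : ¬ intentOf I X ⊆ {n | I g n} := by
    intro hsub
    apply hne
    apply cl_of_intent_eq
    rw [hitT, Set.inter_eq_self_of_subset_left hsub]
  have hclT : cl I T = T := by
    apply le_antisymm
    · intro x hx
      by_cases hxm : I x m
      · exact mixgen_mem_of_mem_cl hKT hx (fun hc => hc hxm)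
      · exact hRT hxm
    · exact subset_cl I T
  have hC0X : C0 ⊆ X := by
    rintro x ⟨hxT, hxm⟩
    have hxg : x ≠ g := fun he => hg (he ▸ hxm)
    have hxcl : x ∈ cl I X := by
      intro n hn
      have h2 : n ∈ Yf I m g T := hYT ▸ hn
      exact h2.1 x ⟨hxT, fun hc => hxg (Set.mem_singleton_iff.1 hc)⟩
    exact mixgen_mem_of_mem_cl hKX hxcl (fun hc => hc hxm)
  have hXC0 : intentOf I X ⊆ intentOf I C0 := intent_anti I hC0X
  have hXC0' : intentOf I X ⊆ intentOf I C0 \ {m} :=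
    fun n hn => ⟨hXC0 hn, fun he => hmX (he ▸ hn)⟩
  have hXT : X ⊆ T := by
    intro x hx
    rw [← hclT]
    intro n hn
    rw [hitT] at hn
    exact hn.1 x hx
  have hitu : intentOf I u = intentOf I C0 ∩ {n | I g n} := by
    have h1 : intentOf I u = Yf I m g u ∩ {n | I g n} := intent_of_mem_g hg hgu
    rw [h1, P7]
    ext n
    simp only [Set.mem_inter_iff, Set.mem_diff, Set.mem_singleton_iff, Set.mem_setOf_eq]
    constructor
    · rintro ⟨⟨h1, _⟩, h2⟩; exact ⟨h1, h2⟩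
    · rintro ⟨h1, h2⟩; exact ⟨⟨h1, fun he => hg (he ▸ h2)⟩, h2⟩
  have hitTu : intentOf I T ⊆ intentOf I u := by
    rw [hitT, hitu]
    exact fun n hn => ⟨hXC0 hn.1, hn.2⟩
  -- the removal trick on T
  have hrem : ∀ x, x ∈ T → ¬ I x m → x ≠ g →
      intentOf I (T \ {x}) ⊆ {n | I x n} → False := by
    intro x hxT hxm hxg hsub
    apply mixgen_rem hKT hxT hxm
    have h1 : T ⊆ cl I (T \ {x}) := by
      intro y hy
      by_cases hyx : y = x
      · subst hyx
        exact fun n hn => hsub hn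
      · exact subset_cl I _ ⟨hy, fun hc => hyx (Set.mem_singleton_iff.1 hc)⟩
    exact (cl_eq_of_between I Set.diff_subset h1).symm
  -- P6
  have P6 : ∀ x, ¬ I x m → x ≠ g → ¬ (intentOf I C0 \ {m} ⊆ {n | I x n}) := by
    intro x hxm hxg hsub
    have hxT : x ∈ T := by
      rw [← hclT]
      intro n hn
      rw [hitT] at hn
      exact hsub (hXC0' hn.1)
    refine hrem x hxT hxm hxg ?_
    intro n hn
    apply hsub
    have hC0sub : C0 ⊆ T \ {x} := by
      rintro y ⟨hyT, hym⟩
      exact ⟨hyT, fun hc => hxm ((Set.mem_singleton_iff.1 hc) ▸ hym)⟩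
    refine ⟨intent_anti I hC0sub hn, ?_⟩
    intro he
    rw [Set.mem_singleton_iff] at he
    subst he
    exact hg (hn g ⟨hgT, fun hc => hxg (Set.mem_singleton_iff.1 hc).symm⟩)
  -- P1
  have P1 : extentOf I (intentOf I u) = u := by
    apply le_antisymm
    · intro x hx
      by_cases hxg : x = g
      · exact hxg ▸ hgu
      · have hxT : x ∈ T := by
          rw [← hclT]
          exact fun n hn => hx n (hitTu hn)
        by_cases hxm : I x m
        · exact Or.inl ⟨hxT, hxm⟩
        · exfalso
          refine hrem x hxT hxm hxg ?_
          intro n hn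
          apply hx
          refine intent_anti I ?_ hn
          rintro y (hy | hy)
          · exact ⟨hy.1, fun hc => hxm ((Set.mem_singleton_iff.1 hc) ▸ hy.2)⟩
          · rw [Set.mem_singleton_iff.1 hy]
            exact ⟨hgT, fun hc => hxg (Set.mem_singleton_iff.1 hc).symm⟩
    · exact subset_cl I u
  -- P2
  have P2 : ∀ V, MixGen I {h : G | ¬ I h m} V → cl I V = u → V = u := by
    intro V hKV hclV
    have hVu : V ⊆ u := hclV ▸ subset_cl I V
    have hgV : g ∈ V := by
      by_contra hgV
      have hmV : m ∈ intentOf I V := by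
        intro x hx
        rcases hVu hx with hc | hc
        · exact hc.2
        · exact absurd (Set.mem_singleton_iff.1 hc) (fun he => hgV (he ▸ hx))
      have hgcl : g ∈ cl I V := hclV ▸ hgu
      exact hg (hgcl m hmV)
    have hC0V : C0 ⊆ V := by
      intro x hx
      by_contra hxV
      refine mixgen_add hKV hxV (fun hc => hc hx.2) ?_
      refine cl_eq_of_between I Set.subset_union_left ?_
      rw [hclV]
      exact Set.union_subset (hclV ▸ subset_cl I V) (by
        intro y hy
        rw [Set.mem_singleton_iff.1 hy]
        exact Or.inl hx)
    apply le_antisymm hVu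
    rintro x (hx | hx)
    · exact hC0V hx
    · exact (Set.mem_singleton_iff.1 hx) ▸ hgV
  -- P3
  have P3 : MixGen (opRel I g m) {h : G | ¬ I h m} u := by
    intro h
    constructor
    · rintro ⟨hhu, hhR⟩ heq
      have hhg : h = g := by
        rcases hhu with hc | hc
        · exact absurd hc.2 hhR
        · exact Set.mem_singleton_iff.1 hc
      subst hhg
      have h1 : h ∈ cl (opRel I h m) u := (g_mem_clJ hg).2 hgu
      rw [← heq] at h1
      exact ((g_mem_clJ hg).1 h1).2 rfl
    · intro hh heq
      have hhm : I h m := of_not_not (fun hc => hh (Or.inr hc))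
      have hhu : h ∉ u := fun hc => hh (Or.inl hc)
      have hhg : h ≠ g := fun he => hg (he ▸ hhm)
      have hY2 : Yf I m g (u ∪ {h}) = Yf I m g u := Yf_eq_of_clJ_eq hg heq
      have huh : (u ∪ {h}) \ {g} = C0 ∪ {h} := by
        rw [Set.union_diff_distrib, hug]
        congr 1
        ext y
        simp only [Set.mem_diff, Set.mem_singleton_iff]
        exact ⟨fun hy => hy.1, fun hy => ⟨hy, fun hc => hhg (hy ▸ hc : h = g)⟩⟩
      have hmem : h ∈ cl I X := by
        have hsub : intentOf I X ⊆ {n | I h n} := by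
          intro n hn
          have h2 : n ∈ Yf I m g u := P7 ▸ hXC0' hn
          rw [← hY2] at h2
          unfold Yf at h2
          rw [huh] at h2
          exact h2.1 h (Or.inr rfl)
        exact fun n hn => hsub hn
      have hhX : h ∈ X := mixgen_mem_of_mem_cl hKX hmem (fun hc => hc hhm)
      exact hhu (Or.inl ⟨hXT hhX, hhm⟩)
  -- P4
  have P4 : intentOf (opRel I g m) u ≠ intentOf I u := by
    intro heq
    apply hnsub
    intro n hn
    have h1 : n ∈ intentOf I u := by
      rw [← heq, intentJ_of_mem hg hgu, P7]
      exact hXC0' hn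
    exact h1 g hgu
  -- P5
  have P5 : ¬ ({h : G | ¬ I h m} ⊆ u) := by
    intro hsub
    obtain ⟨r, hrX, hrm⟩ : ∃ x ∈ X, ¬ I x m := by
      by_contra hc
      push_neg at hc
      exact hmX (fun x hx => hc x hx)
    rcases hsub hrm with hc | hc
    · exact hrm hc.2
    · exact hgX ((Set.mem_singleton_iff.1 hc) ▸ hrX)
  exact ⟨P1, P2, P3, P4, P5, P6, P7⟩
end witness

section valdef
variable {I : G → M → Prop} {m : M} {g : G}

lemma B_facts (hg : ¬ I g m) {S : Set G}
    (h2 : intentOf (opRel I g m) S ≠ intentOf I S)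
    (h3 : intentOf (opRel I g m) (S ∪ {g}) = intentOf I S) :
    g ∉ S ∧ m ∉ intentOf I S := by
  have hgS : g ∉ S := by
    intro hgS
    have : S ∪ {g} = S := by
      apply Set.union_eq_self_of_subset_right
      exact fun x hx => (Set.mem_singleton_iff.1 hx) ▸ hgS
    rw [this] at h3
    exact h2 h3
  refine ⟨hgS, ?_⟩
  have h4 : intentOf I S = Yf I m g S := by
    rw [← h3, intentJ_of_mem hg (Or.inr rfl), Yf_union_g]
  intro hm
  exact (h4 ▸ hm : m ∈ Yf I m g S).2 rfl

lemma N_facts (hg : ¬ I g m) {S : Set G}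
    (hK : MixGen I {h : G | ¬ I h m} S)
    (hN : ¬ MixGen (opRel I g m) {h : G | ¬ I h m} S) :
    g ∉ S ∧ m ∉ intentOf I S := by
  have hgS : g ∉ S := fun h => hN (Lmix_of_mem_g hg hK h)
  exact ⟨hgS, fun hm => hN (NA_lemma hg hK hgS hm)⟩

lemma Yf_eq_intent {S : Set G} (hgS : g ∉ S) (hmS : m ∉ intentOf I S) :
    Yf I m g S = intentOf I S := by
  rw [Yf_of_not_mem hgS, Set.diff_singleton_eq_self hmS]

lemma clJ_eq_elim (hg : ¬ I g m) {X X' : Set G}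
    (h : cl (opRel I g m) X = cl (opRel I g m) X') :
    (g ∈ X ↔ g ∈ X') ∧ Yf I m g X = Yf I m g X' :=
  (intentJ_eq_iff hg).1 (intent_eq_of_cl_eq _ h)

lemma intent_eq_of_Yf_eq_mem (hg : ¬ I g m) {S T : Set G} (hgS : g ∈ S) (hgT : g ∈ T)
    (h : Yf I m g S = Yf I m g T) : intentOf I S = intentOf I T := by
  rw [intent_of_mem_g hg hgS, intent_of_mem_g hg hgT, h]

lemma intent_eq_of_Yf_eq_m {S T : Set G} (hgS : g ∉ S) (hgT : g ∉ T)
    (hmS : m ∈ intentOf I S) (hmT : m ∈ intentOf I T)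
    (h : Yf I m g S = Yf I m g T) : intentOf I S = intentOf I T := by
  rw [Yf_of_not_mem hgS, Yf_of_not_mem hgT] at h
  ext n
  by_cases hn : n = m
  · subst hn; exact ⟨fun _ => hmT, fun _ => hmS⟩
  · constructor
    · intro h1; exact ((Set.ext_iff.1 h n).1 ⟨h1, hn⟩).1
    · intro h1; exact ((Set.ext_iff.1 h n).2 ⟨h1, hn⟩).1

end valdef

section maindef
variable (I : G → M → Prop) (m : M) (g : G) (𝒮 : Set (Set G))

/-- The witness set `u = (S ∩ m') ∪ {g}`. -/
def uu (S : Set G) : Set G := {x ∈ S | I x m} ∪ {g}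

/-- `S` is a `D`-element participating in a clash with a `B`-extra. -/
def dclP (S : Set G) : Prop :=
  {h : G | ¬ I h m} ⊆ S ∧ intentOf (opRel I g m) S ≠ intentOf I S ∧
    ∃ X ∈ 𝒮, (MixGen (opRel I g m) {h : G | ¬ I h m} X ∧
        intentOf (opRel I g m) X ≠ intentOf I X ∧
        intentOf (opRel I g m) (X ∪ {g}) = intentOf I X) ∧
      cl (opRel I g m) (X ∪ {g}) = cl (opRel I g m) S

open Classical in
/-- The assigned `L`-extent of an element of `𝒮 \ C`. -/
noncomputable def val0 (S : Set G) : Set G :=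
  if MixGen (opRel I g m) {h : G | ¬ I h m} S then
    (if dclP I m g 𝒮 S then cl (opRel I g m) (uu I m g S) else cl (opRel I g m) S)
  else cl (opRel I g m) (S ∪ {g})

variable {I m g 𝒮}

lemma val0_N {S : Set G} (h : ¬ MixGen (opRel I g m) {h : G | ¬ I h m} S) :
    val0 I m g 𝒮 S = cl (opRel I g m) (S ∪ {g}) := by
  unfold val0
  rw [if_neg h]

lemma val0_dcl {S : Set G} (h1 : MixGen (opRel I g m) {h : G | ¬ I h m} S)
    (h2 : dclP I m g 𝒮 S) : val0 I m g 𝒮 S = cl (opRel I g m) (uu I m g S) := by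
  unfold val0
  rw [if_pos h1, if_pos h2]

lemma val0_std {S : Set G} (h1 : MixGen (opRel I g m) {h : G | ¬ I h m} S)
    (h2 : ¬ dclP I m g 𝒮 S) : val0 I m g 𝒮 S = cl (opRel I g m) S := by
  unfold val0
  rw [if_pos h1, if_neg h2]

lemma val0_is_clJ (S : Set G) : ∃ W, val0 I m g 𝒮 S = cl (opRel I g m) W := by
  by_cases h1 : MixGen (opRel I g m) {h : G | ¬ I h m} S
  · by_cases h2 : dclP I m g 𝒮 S
    · exact ⟨_, val0_dcl h1 h2⟩
    · exact ⟨_, val0_std h1 h2⟩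
  · exact ⟨_, val0_N h1⟩

lemma uu_diff_g (hg : ¬ I g m) (S : Set G) : uu I m g S \ {g} = {x ∈ S | I x m} := by
  unfold uu
  rw [Set.union_diff_right]
  ext x
  simp only [Set.mem_diff, Set.mem_singleton_iff, Set.mem_setOf_eq, Set.mem_sep_iff]
  constructor
  · rintro ⟨h1, _⟩; exact h1
  · intro h1; exact ⟨h1, fun he => hg (he ▸ h1.2)⟩

lemma Yf_uu (hg : ¬ I g m) (S : Set G) :
    Yf I m g (uu I m g S) = intentOf I {x ∈ S | I x m} \ {m} := by
  unfold Yf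
  rw [uu_diff_g hg]

end maindef

section biglemmas
variable {I : G → M → Prop} {m : M} {g : G} {𝒮 : Set (Set G)}

/-- Abbreviation for the B-set condition. -/
def Bcond (I : G → M → Prop) (m : M) (g : G) (S : Set G) : Prop :=
  MixGen (opRel I g m) {h : G | ¬ I h m} S ∧
    intentOf (opRel I g m) S ≠ intentOf I S ∧
    intentOf (opRel I g m) (S ∪ {g}) = intentOf I S

/-- Get the witness pack from a `dclP` hypothesis. -/
lemma pack_of_dcl (hg : ¬ I g m)
    (hmix : ∀ S ∈ 𝒮, MixGen I {h : G | ¬ I h m} S) (hinj : Set.InjOn (cl I) 𝒮)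
    {S : Set G} (hS : S ∈ 𝒮) (hd : dclP I m g 𝒮 S) :
    extentOf I (intentOf I (uu I m g S)) = uu I m g S ∧
    (∀ V, MixGen I {h : G | ¬ I h m} V → cl I V = uu I m g S → V = uu I m g S) ∧
    MixGen (opRel I g m) {h : G | ¬ I h m} (uu I m g S) ∧
    intentOf (opRel I g m) (uu I m g S) ≠ intentOf I (uu I m g S) ∧
    ¬ ({h : G | ¬ I h m} ⊆ uu I m g S) ∧
    (∀ x, ¬ I x m → x ≠ g → ¬ (intentOf I {x ∈ S | I x m} \ {m} ⊆ {n | I x n})) := by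
  obtain ⟨hRsub, _, X, hX𝒮, ⟨hLX, hXne, hXeq⟩, hXcl⟩ := hd
  obtain ⟨hgX, hmX⟩ := B_facts hg hXne hXeq
  have hYX : Yf I m g S = intentOf I X := by
    have h1 := (clJ_eq_elim hg hXcl).2
    rw [Yf_union_g, Yf_eq_intent hgX hmX] at h1
    exact h1.symm
  have hgS : g ∈ S := hRsub hg
  have hXneS : cl I X ≠ cl I S := by
    intro hc
    exact hgX ((hinj hX𝒮 hS hc) ▸ hgS)
  obtain ⟨P1, P2, P3, P4, P5, P6, _⟩ :=
    witness_pack hg (hmix X hX𝒮) (hmix S hS) hRsub hgX hmX hYX hXneS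
  exact ⟨P1, P2, P3, P4, P5, P6⟩

/-- An N-element's slot never equals the slot of an L-mixed generator. -/
lemma main_NL (hg : ¬ I g m)
    (hmix : ∀ S ∈ 𝒮, MixGen I {h : G | ¬ I h m} S) (hinj : Set.InjOn (cl I) 𝒮)
    {S T : Set G} (hS : S ∈ 𝒮) (hT : T ∈ 𝒮)
    (hTnotC : MixGen (opRel I g m) {h : G | ¬ I h m} T →
      intentOf (opRel I g m) T ≠ intentOf I T →
      intentOf (opRel I g m) (T ∪ {g}) ≠ intentOf I T → {h : G | ¬ I h m} ⊆ T)
    (hLSno : ¬ MixGen (opRel I g m) {h : G | ¬ I h m} S)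
    (hLT : MixGen (opRel I g m) {h : G | ¬ I h m} T)
    (heq : cl (opRel I g m) (S ∪ {g}) = val0 I m g 𝒮 T) : False := by
  have hKS := hmix S hS
  have hKT := hmix T hT
  obtain ⟨hgS, hmS⟩ := N_facts hg hKS hLSno
  by_cases hdT : dclP I m g 𝒮 T
  · rw [val0_dcl hLT hdT] at heq
    obtain ⟨_, _, _, _, _, P6⟩ := pack_of_dcl hg hmix hinj hT hdT
    have hY2 := (clJ_eq_elim hg heq).2
    rw [Yf_union_g, Yf_eq_intent hgS hmS, Yf_uu hg] at hY2
    obtain ⟨r, hrS, hrm⟩ : ∃ x ∈ S, ¬ I x m := by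
      by_contra hc
      push_neg at hc
      exact hmS (fun x hx => hc x hx)
    refine P6 r hrm (fun he => hgS (he ▸ hrS)) ?_
    rw [← hY2]
    exact fun n hn => hn r hrS
  · rw [val0_std hLT hdT] at heq
    have hgT : g ∈ T := ((clJ_eq_elim hg heq).1).1 (Or.inr rfl)
    have hY2 := (clJ_eq_elim hg heq).2
    rw [Yf_union_g, Yf_eq_intent hgS hmS] at hY2
    by_cases hTA : intentOf (opRel I g m) T = intentOf I T
    · have hit : intentOf I S = intentOf I T := by
        rw [hY2, ← hTA, intentJ_of_mem hg hgT]
      have hST : S = T := hinj hS hT (cl_of_intent_eq I hit)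
      exact hLSno (hST ▸ hLT)
    · have hTg : T ∪ {g} = T := Set.union_eq_self_of_subset_right
        (fun x hx => (Set.mem_singleton_iff.1 hx) ▸ hgT)
      have hRT : {h : G | ¬ I h m} ⊆ T :=
        hTnotC hLT hTA (fun hc => hTA (by rwa [hTg] at hc))
      exact H1_lemma hg hKT hKS hLSno hgT hRT hgS hmS hY2.symm

/-- A Dcl-element's slot never equals `cl J T` for another element of `𝒮`. -/
lemma main_dcl_any (hg : ¬ I g m)
    (hmix : ∀ S ∈ 𝒮, MixGen I {h : G | ¬ I h m} S) (hinj : Set.InjOn (cl I) 𝒮)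
    {S T : Set G} (hS : S ∈ 𝒮) (hT : T ∈ 𝒮)
    (hTnotC : MixGen (opRel I g m) {h : G | ¬ I h m} T →
      intentOf (opRel I g m) T ≠ intentOf I T →
      intentOf (opRel I g m) (T ∪ {g}) ≠ intentOf I T → {h : G | ¬ I h m} ⊆ T)
    (hdS : dclP I m g 𝒮 S)
    (heq : cl (opRel I g m) (uu I m g S) = cl (opRel I g m) T) : False := by
  have hKT := hmix T hT
  obtain ⟨P1, P2, _, P4, P5, _⟩ := pack_of_dcl hg hmix hinj hS hdS
  have hguu : g ∈ uu I m g S := Or.inr rfl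
  have hgT : g ∈ T := ((clJ_eq_elim hg heq).1).1 hguu
  have hY2 := (clJ_eq_elim hg heq).2
  have hit : intentOf I T = intentOf I (uu I m g S) := by
    rw [intent_of_mem_g hg hgT, intent_of_mem_g hg hguu, hY2]
  have hclTu : cl I T = uu I m g S := by
    have h1 : cl I T = cl I (uu I m g S) := cl_of_intent_eq I hit.symm ▸ rfl
    rw [cl_of_intent_eq I hit]
    exact P1
  have hTuu : T = uu I m g S := P2 T hKT hclTu
  by_cases hTA : intentOf (opRel I g m) T = intentOf I T
  · rw [hTuu] at hTA
    exact P4 hTA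
  · have hTg : T ∪ {g} = T := Set.union_eq_self_of_subset_right
      (fun x hx => (Set.mem_singleton_iff.1 hx) ▸ hgT)
    have hLT : MixGen (opRel I g m) {h : G | ¬ I h m} T := by
      by_contra hLTno
      obtain ⟨hgT', _⟩ := N_facts hg hKT hLTno
      exact hgT' hgT
    have hRT : {h : G | ¬ I h m} ⊆ T :=
      hTnotC hLT hTA (fun hc => hTA (by rwa [hTg] at hc))
    rw [hTuu] at hRT
    exact P5 hRT

/-- Injectivity of `val0` on `𝒮 \ C`. -/
lemma main_inj (hg : ¬ I g m)
    (hmix : ∀ S ∈ 𝒮, MixGen I {h : G | ¬ I h m} S) (hinj : Set.InjOn (cl I) 𝒮)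
    {S T : Set G} (hS : S ∈ 𝒮) (hT : T ∈ 𝒮)
    (hSnotC : MixGen (opRel I g m) {h : G | ¬ I h m} S →
      intentOf (opRel I g m) S ≠ intentOf I S →
      intentOf (opRel I g m) (S ∪ {g}) ≠ intentOf I S → {h : G | ¬ I h m} ⊆ S)
    (hTnotC : MixGen (opRel I g m) {h : G | ¬ I h m} T →
      intentOf (opRel I g m) T ≠ intentOf I T →
      intentOf (opRel I g m) (T ∪ {g}) ≠ intentOf I T → {h : G | ¬ I h m} ⊆ T)
    (heq : val0 I m g 𝒮 S = val0 I m g 𝒮 T) : S = T := by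
  have hKS := hmix S hS
  have hKT := hmix T hT
  by_cases hLS : MixGen (opRel I g m) {h : G | ¬ I h m} S
  · by_cases hLT : MixGen (opRel I g m) {h : G | ¬ I h m} T
    · -- both Lmix
      by_cases hdS : dclP I m g 𝒮 S
      · by_cases hdT : dclP I m g 𝒮 T
        · -- both dcl
          rw [val0_dcl hLS hdS, val0_dcl hLT hdT] at heq
          obtain ⟨P1S, _, _, _, _, _⟩ := pack_of_dcl hg hmix hinj hS hdS
          obtain ⟨P1T, _, _, _, _, _⟩ := pack_of_dcl hg hmix hinj hT hdT
          have hY2 := (clJ_eq_elim hg heq).2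
          have hit : intentOf I (uu I m g S) = intentOf I (uu I m g T) :=
            intent_eq_of_Yf_eq_mem hg (Or.inr rfl) (Or.inr rfl) hY2
          have huueq : uu I m g S = uu I m g T := by
            rw [← P1S, ← P1T, hit]
          ext x
          constructor
          · intro hx
            by_cases hxm : I x m
            · have : x ∈ uu I m g T := huueq ▸ (Or.inl ⟨hx, hxm⟩)
              rcases this with hc | hc
              · exact hc.1
              · exact absurd hxm ((Set.mem_singleton_iff.1 hc) ▸ hg)
            · exact hdT.1 hxm
          · intro hx
            by_cases hxm : I x m
            · have : x ∈ uu I m g S := huueq ▸ (Or.inl ⟨hx, hxm⟩)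
              rcases this with hc | hc
              · exact hc.1
              · exact absurd hxm ((Set.mem_singleton_iff.1 hc) ▸ hg)
            · exact hdS.1 hxm
        · -- S dcl, T std
          rw [val0_dcl hLS hdS, val0_std hLT hdT] at heq
          exact (main_dcl_any hg hmix hinj hS hT hTnotC hdS heq).elim
      · by_cases hdT : dclP I m g 𝒮 T
        · rw [val0_std hLS hdS, val0_dcl hLT hdT] at heq
          exact (main_dcl_any hg hmix hinj hT hS hSnotC hdT heq.symm).elim
        · -- both std
          rw [val0_std hLS hdS, val0_std hLT hdT] at heq
          obtain ⟨hbit, hY⟩ := clJ_eq_elim hg heq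
          by_cases hgS : g ∈ S
          · have hgT : g ∈ T := hbit.1 hgS
            exact hinj hS hT (cl_of_intent_eq I (intent_eq_of_Yf_eq_mem hg hgS hgT hY))
          · have hgT : g ∉ T := fun hc => hgS (hbit.2 hc)
            by_cases hmS : m ∈ intentOf I S
            · by_cases hmT : m ∈ intentOf I T
              · exact hinj hS hT (cl_of_intent_eq I
                  (intent_eq_of_Yf_eq_m hgS hgT hmS hmT hY))
              · exact (Gamma1 hg hKS hKT hLT hgS hgT hmS hmT heq).elim
            · by_cases hmT : m ∈ intentOf I T
              · exact (Gamma1 hg hKT hKS hLS hgT hgS hmT hmS heq.symm).elim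
              · have hit : intentOf I S = intentOf I T := by
                  rw [← Yf_eq_intent hgS hmS, ← Yf_eq_intent hgT hmT, hY]
                exact hinj hS hT (cl_of_intent_eq I hit)
    · -- T is N
      rw [val0_N hLT] at heq
      by_cases hdS : dclP I m g 𝒮 S
      · rw [val0_dcl hLS hdS] at heq
        -- N vs dcl : reuse main_NL with swapped roles? main_NL expects val0 T; here:
        -- heq : cl J (uu S) = cl J (T ∪ {g})
        obtain ⟨_, _, _, _, _, P6⟩ := pack_of_dcl hg hmix hinj hS hdS
        obtain ⟨hgT, hmT⟩ := N_facts hg hKT hLT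
        have hY2 := (clJ_eq_elim hg heq).2
        rw [Yf_uu hg, Yf_union_g, Yf_eq_intent hgT hmT] at hY2
        obtain ⟨r, hrT, hrm⟩ : ∃ x ∈ T, ¬ I x m := by
          by_contra hc
          push_neg at hc
          exact hmT (fun x hx => hc x hx)
        exact (P6 r hrm (fun he => hgT (he ▸ hrT))
          (by rw [hY2]; exact fun n hn => hn r hrT)).elim
      · rw [val0_std hLS hdS] at heq
        exact ((main_NL hg hmix hinj hT hS hSnotC hLT hLS
          (by rw [val0_std hLS hdS]; exact heq.symm)).elim)
  · -- S is N
    rw [val0_N hLS] at heq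
    by_cases hLT : MixGen (opRel I g m) {h : G | ¬ I h m} T
    · exact (main_NL hg hmix hinj hS hT hTnotC hLS hLT heq).elim
    · rw [val0_N hLT] at heq
      obtain ⟨hgS, hmS⟩ := N_facts hg hKS hLS
      obtain ⟨hgT, hmT⟩ := N_facts hg hKT hLT
      have hY2 := (clJ_eq_elim hg heq).2
      rw [Yf_union_g, Yf_union_g, Yf_eq_intent hgS hmS, Yf_eq_intent hgT hmT] at hY2
      exact hinj hS hT (cl_of_intent_eq I hY2)

/-- Cross injectivity : `val0 S` never equals a B-extra slot. -/
lemma cross_inj (hg : ¬ I g m)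
    (hmix : ∀ S ∈ 𝒮, MixGen I {h : G | ¬ I h m} S) (hinj : Set.InjOn (cl I) 𝒮)
    {S T : Set G} (hS : S ∈ 𝒮) (hT : T ∈ 𝒮)
    (hSnotC : MixGen (opRel I g m) {h : G | ¬ I h m} S →
      intentOf (opRel I g m) S ≠ intentOf I S →
      intentOf (opRel I g m) (S ∪ {g}) ≠ intentOf I S → {h : G | ¬ I h m} ⊆ S)
    (hTB : Bcond I m g T)
    (heq : val0 I m g 𝒮 S = cl (opRel I g m) (T ∪ {g})) : False := by
  have hKS := hmix S hS
  obtain ⟨hLT, hTne, hTeq⟩ := hTB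
  obtain ⟨hgT, hmT⟩ := B_facts hg hTne hTeq
  by_cases hLS : MixGen (opRel I g m) {h : G | ¬ I h m} S
  · by_cases hdS : dclP I m g 𝒮 S
    · rw [val0_dcl hLS hdS] at heq
      obtain ⟨_, _, _, _, _, P6⟩ := pack_of_dcl hg hmix hinj hS hdS
      have hY2 := (clJ_eq_elim hg heq).2
      rw [Yf_uu hg, Yf_union_g, Yf_eq_intent hgT hmT] at hY2
      obtain ⟨r, hrT, hrm⟩ : ∃ x ∈ T, ¬ I x m := by
        by_contra hc
        push_neg at hc
        exact hmT (fun x hx => hc x hx)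
      exact P6 r hrm (fun he => hgT (he ▸ hrT))
        (by rw [hY2]; exact fun n hn => hn r hrT)
    · rw [val0_std hLS hdS] at heq
      have hgS : g ∈ S := ((clJ_eq_elim hg heq).1).2 (Or.inr rfl)
      by_cases hSA : intentOf (opRel I g m) S = intentOf I S
      · have hY2 := (clJ_eq_elim hg heq).2
        rw [Yf_union_g, Yf_eq_intent hgT hmT] at hY2
        have hit : intentOf I S = intentOf I T := by
          rw [← hSA, intentJ_of_mem hg hgS, hY2]
        have hST : S = T := hinj hS hT (cl_of_intent_eq I hit)
        exact hgT (hST ▸ hgS)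
      · have hSg : S ∪ {g} = S := Set.union_eq_self_of_subset_right
          (fun x hx => (Set.mem_singleton_iff.1 hx) ▸ hgS)
        have hRS : {h : G | ¬ I h m} ⊆ S :=
          hSnotC hLS hSA (fun hc => hSA (by rwa [hSg] at hc))
        exact hdS ⟨hRS, hSA, T, hT, ⟨hLT, hTne, hTeq⟩, heq.symm⟩
  · rw [val0_N hLS] at heq
    obtain ⟨hgS, hmS⟩ := N_facts hg hKS hLS
    have hY2 := (clJ_eq_elim hg heq).2
    rw [Yf_union_g, Yf_union_g, Yf_eq_intent hgS hmS, Yf_eq_intent hgT hmT] at hY2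
    have hST : S = T := hinj hS hT (cl_of_intent_eq I hY2)
    exact hLS (hST ▸ hLT)

end biglemmas

end FCA15


theorem statement15 {G M : Type*} [Fintype G] [Fintype M] (I : G → M → Prop)
    (m : M) (g : G) (hg : ¬ I g m) (𝒮 : Set (Set G))
    (hmix : ∀ S ∈ 𝒮, MixGen I {h : G | ¬ I h m} S)
    (hinj : Set.InjOn (cl I) 𝒮)
    (hcompl : ∀ A : Set G, IsExtent I A → ∃ S ∈ 𝒮, cl I S = A) :
    (numConcepts I : ℤ) +
        ({S ∈ 𝒮 | MixGen (opRel I g m) {h : G | ¬ I h m} S ∧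
          intentOf (opRel I g m) S ≠ intentOf I S ∧
          intentOf (opRel I g m) (S ∪ {g}) = intentOf I S}.ncard : ℤ) -
        ({S ∈ 𝒮 | MixGen (opRel I g m) {h : G | ¬ I h m} S ∧
          intentOf (opRel I g m) S ≠ intentOf I S ∧
          intentOf (opRel I g m) (S ∪ {g}) ≠ intentOf I S ∧
          ¬ {h : G | ¬ I h m} ⊆ S}.ncard : ℤ) ≤
      (numConcepts (opRel I g m) : ℤ) := by
  classical
  set Bs : Set (Set G) := {S ∈ 𝒮 | MixGen (opRel I g m) {h : G | ¬ I h m} S ∧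
      intentOf (opRel I g m) S ≠ intentOf I S ∧
      intentOf (opRel I g m) (S ∪ {g}) = intentOf I S} with hBsdef
  set Cs : Set (Set G) := {S ∈ 𝒮 | MixGen (opRel I g m) {h : G | ¬ I h m} S ∧
      intentOf (opRel I g m) S ≠ intentOf I S ∧
      intentOf (opRel I g m) (S ∪ {g}) ≠ intentOf I S ∧
      ¬ {h : G | ¬ I h m} ⊆ S} with hCsdef
  have hBsub : Bs ⊆ 𝒮 := fun S hS => hS.1
  have hCsub : Cs ⊆ 𝒮 := fun S hS => hS.1
  have himg : cl I '' 𝒮 = {S : Set G | IsExtent I S} := by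
    apply le_antisymm
    · rintro _ ⟨S, _, rfl⟩
      exact FCA15.isExtent_cl I S
    · intro A hA
      obtain ⟨S, hS, hSA⟩ := hcompl A hA
      exact ⟨S, hS, hSA⟩
  have hnumI : numConcepts I = 𝒮.ncard := by
    rw [numConcepts, ← himg, Set.ncard_image_of_injOn hinj]
  have hnotC : ∀ S, S ∈ 𝒮 \ Cs →
      (MixGen (opRel I g m) {h : G | ¬ I h m} S →
        intentOf (opRel I g m) S ≠ intentOf I S →
        intentOf (opRel I g m) (S ∪ {g}) ≠ intentOf I S → {h : G | ¬ I h m} ⊆ S) := by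
    rintro S ⟨hS𝒮, hSC⟩ h1 h2 h3
    by_contra hR
    exact hSC ⟨hS𝒮, h1, h2, h3, hR⟩
  set f : Set G × Bool → Set G :=
    fun p => cond p.2 (cl (opRel I g m) (p.1 ∪ {g})) (FCA15.val0 I m g 𝒮 p.1) with hfdef
  set Dom : Set (Set G × Bool) :=
    ((fun S => (S, false)) '' (𝒮 \ Cs)) ∪ ((fun S => (S, true)) '' Bs) with hDomdef
  have hmaps : ∀ p ∈ Dom, f p ∈ {E : Set G | IsExtent (opRel I g m) E} := by
    rintro ⟨S, b⟩ _
    cases b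
    · show IsExtent (opRel I g m) (FCA15.val0 I m g 𝒮 S)
      obtain ⟨W, hW⟩ := FCA15.val0_is_clJ (I := I) (m := m) (g := g) (𝒮 := 𝒮) S
      rw [hW]
      exact FCA15.isExtent_cl _ W
    · show IsExtent (opRel I g m) (cl (opRel I g m) (S ∪ {g}))
      exact FCA15.isExtent_cl _ _
  have hinjf : Set.InjOn f Dom := by
    rintro ⟨S, b1⟩ hp ⟨T, b2⟩ hq hfeq
    have hmem : ∀ (S' : Set G) (b' : Bool), (S', b') ∈ Dom →
        (b' = false ∧ S' ∈ 𝒮 \ Cs) ∨ (b' = true ∧ S' ∈ Bs) := by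
      rintro S' b' (⟨S1, hm1, heq1⟩ | ⟨S1, hm1, heq1⟩)
      · simp only [Prod.mk.injEq] at heq1
        exact Or.inl ⟨heq1.2.symm, heq1.1 ▸ hm1⟩
      · simp only [Prod.mk.injEq] at heq1
        exact Or.inr ⟨heq1.2.symm, heq1.1 ▸ hm1⟩
    rcases hmem S b1 hp with ⟨hb1, hSm⟩ | ⟨hb1, hSm⟩ <;>
      rcases hmem T b2 hq with ⟨hb2, hTm⟩ | ⟨hb2, hTm⟩ <;> subst hb1 <;> subst hb2
    · -- false false
      have hfeq' : FCA15.val0 I m g 𝒮 S = FCA15.val0 I m g 𝒮 T := hfeq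
      have := FCA15.main_inj hg hmix hinj hSm.1 hTm.1
        (hnotC S hSm) (hnotC T hTm) hfeq'
      rw [this]
    · -- false true
      have hfeq' : FCA15.val0 I m g 𝒮 S = cl (opRel I g m) (T ∪ {g}) := hfeq
      exact (FCA15.cross_inj hg hmix hinj hSm.1 hTm.1 (hnotC S hSm)
        ⟨hTm.2.1, hTm.2.2.1, hTm.2.2.2⟩ hfeq').elim
    · -- true false
      have hfeq' : FCA15.val0 I m g 𝒮 T = cl (opRel I g m) (S ∪ {g}) := hfeq.symm
      exact (FCA15.cross_inj hg hmix hinj hTm.1 hSm.1 (hnotC T hTm)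
        ⟨hSm.2.1, hSm.2.2.1, hSm.2.2.2⟩ hfeq').elim
    · -- true true
      have hfeq' : cl (opRel I g m) (S ∪ {g}) = cl (opRel I g m) (T ∪ {g}) := hfeq
      obtain ⟨hgS, hmS⟩ := FCA15.B_facts hg hSm.2.2.1 hSm.2.2.2
      obtain ⟨hgT, hmT⟩ := FCA15.B_facts hg hTm.2.2.1 hTm.2.2.2
      have hY2 := (FCA15.clJ_eq_elim hg hfeq').2
      rw [FCA15.Yf_union_g, FCA15.Yf_union_g, FCA15.Yf_eq_intent hgS hmS,
        FCA15.Yf_eq_intent hgT hmT] at hY2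
      have : S = T := hinj hSm.1 hTm.1 (FCA15.cl_of_intent_eq I hY2)
      rw [this]
  have hD1 : ((fun S : Set G => (S, false)) '' (𝒮 \ Cs)).ncard = (𝒮 \ Cs).ncard :=
    Set.ncard_image_of_injective _ (fun a b h => congrArg Prod.fst h)
  have hD2 : ((fun S : Set G => (S, true)) '' Bs).ncard = Bs.ncard :=
    Set.ncard_image_of_injective _ (fun a b h => congrArg Prod.fst h)
  have hdisj : Disjoint ((fun S : Set G => (S, false)) '' (𝒮 \ Cs))
      ((fun S : Set G => (S, true)) '' Bs) := by
    rw [Set.disjoint_left]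
    rintro p ⟨S1, _, rfl⟩ ⟨S2, _, hp2⟩
    rw [Prod.ext_iff] at hp2
    exact Bool.noConfusion hp2.2
  have hDcard : Dom.ncard = (𝒮 \ Cs).ncard + Bs.ncard := by
    rw [hDomdef, Set.ncard_union_eq hdisj (Set.toFinite _) (Set.toFinite _), hD1, hD2]
  have hle : Dom.ncard ≤ numConcepts (opRel I g m) :=
    Set.ncard_le_ncard_of_injOn f hmaps hinjf (Set.toFinite _)
  have hkey : (𝒮 \ Cs).ncard + Bs.ncard ≤ numConcepts (opRel I g m) := hDcard ▸ hle
  have hCcard : (𝒮 \ Cs).ncard = 𝒮.ncard - Cs.ncard :=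
    Set.ncard_diff hCsub (Set.toFinite _)
  have hCle : Cs.ncard ≤ 𝒮.ncard := Set.ncard_le_ncard hCsub (Set.toFinite _)
  rw [hnumI]
  omega
end
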